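/- arXiv:0801.4616 — 9 statements merged into one kernel-verified Lean document; each statement's English description precedes it below -/
import Mathlib

section
/- Let $M$ be a $k\times k$ matrix with integer entries and let $u\in\mathbb{R}^k$ be a vector such that $\|M^n u\|\to 0$ as $n\to\infty$. Then the convergence is exponential: there exist $0\le r<1$ and a constant $K$ such that $\|M^n u\|\le K r^n$ for all $n\in\mathbb{N}$. -/
open Filter Topology

set_option maxHeartbeats 1000000 in
/-- If `M` is a `k × k` integer matrix and `u ∈ ℝ^k` satisfies
`‖Mⁿ u‖ → 0`, then the convergence is exponential: there are `0 ≤ r < 1` and a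
constant `K` with `‖Mⁿ u‖ ≤ K rⁿ` for all `n`. -/
theorem exponential_decay_of_integer_matrix_power
    {k : ℕ} (M : Matrix (Fin k) (Fin k) ℤ) (u : Fin k → ℝ)
    (h : Tendsto (fun n : ℕ => ‖((M.map (Int.cast : ℤ → ℝ)) ^ n).mulVec u‖)
      atTop (nhds 0)) :
    ∃ (r K : ℝ), 0 ≤ r ∧ r < 1 ∧
      ∀ n : ℕ, ‖((M.map (Int.cast : ℤ → ℝ)) ^ n).mulVec u‖ ≤ K * r ^ n := by
  set A := M.map (Int.cast : ℤ → ℝ) with hAdef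
  -- the submodule of vectors whose orbit tends to zero
  set S : Submodule ℝ (Fin k → ℝ) :=
    { carrier := {v | Tendsto (fun n : ℕ => (A ^ n).mulVec v) atTop (𝓝 0)}
      add_mem' := by
        intro a b ha hb
        simpa [Matrix.mulVec_add] using ha.add hb
      zero_mem' := by
        simp only [Set.mem_setOf_eq, Matrix.mulVec_zero]
        exact tendsto_const_nhds
      smul_mem' := by
        intro c v hv
        simpa [Matrix.mulVec_smul] using hv.const_smul c } with hSdef
  -- the span of the orbit of u
  set W : Submodule ℝ (Fin k → ℝ) :=
    Submodule.span ℝ (Set.range fun n : ℕ => (A ^ n).mulVec u) with hWdef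
  have hWS : W ≤ S := by
    rw [hWdef, Submodule.span_le]
    rintro _ ⟨m, rfl⟩
    have h0 : Tendsto (fun n : ℕ => (A ^ n).mulVec u) atTop (𝓝 0) :=
      tendsto_zero_iff_norm_tendsto_zero.mpr h
    have h1 : Tendsto (fun n : ℕ => (A ^ (n + m)).mulVec u) atTop (𝓝 0) :=
      h0.comp (tendsto_add_atTop_nat m)
    show Tendsto (fun n : ℕ => (A ^ n).mulVec ((A ^ m).mulVec u)) atTop (𝓝 0)
    have heq : (fun n : ℕ => (A ^ n).mulVec ((A ^ m).mulVec u))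
        = fun n : ℕ => (A ^ (n + m)).mulVec u := by
      funext n
      rw [Matrix.mulVec_mulVec, ← pow_add]
    rw [heq]
    exact h1
  have hmemW : ∀ n : ℕ, (A ^ n).mulVec u ∈ W := fun n =>
    Submodule.subset_span ⟨n, rfl⟩
  -- basis of W
  haveI : FiniteDimensional ℝ W := inferInstance
  set d := Module.finrank ℝ W with hd
  set b : Module.Basis (Fin d) ℝ W := Module.finBasis ℝ W with hb
  -- coordinate functionals are continuous
  set C : Fin d → ℝ := fun i => ‖(LinearMap.toContinuousLinearMap (b.coord i))‖ with hC
  have hcoord : ∀ (i : Fin d) (w : W), |b.repr w i| ≤ C i * ‖w‖ := by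
    intro i w
    have := (LinearMap.toContinuousLinearMap (b.coord i)).le_opNorm w
    simpa [Module.Basis.coord_apply, Real.norm_eq_abs] using this
  set g : ℕ → ℝ := fun n => ∑ i : Fin d, C i * ‖(A ^ n).mulVec ((b i : Fin k → ℝ))‖
    with hg
  -- g tends to 0
  have hgto : Tendsto g atTop (𝓝 0) := by
    rw [hg]
    have : (0 : ℝ) = ∑ _i : Fin d, 0 := by simp
    rw [this]
    apply tendsto_finset_sum
    intro i _
    have hbi : ((b i : Fin k → ℝ)) ∈ S := hWS (b i).2
    have : Tendsto (fun n : ℕ => ‖(A ^ n).mulVec ((b i : Fin k → ℝ))‖) atTop (𝓝 0) := by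
      simpa using (tendsto_zero_iff_norm_tendsto_zero.mp (by exact hbi)).norm
    simpa using this.const_mul (C i)
  -- key uniform bound on W
  have hkey : ∀ (n : ℕ) (v : Fin k → ℝ), v ∈ W → ‖(A ^ n).mulVec v‖ ≤ g n * ‖v‖ := by
    intro n v hv
    set w : W := ⟨v, hv⟩ with hw
    have hrepr : v = ∑ i : Fin d, b.repr w i • ((b i : Fin k → ℝ)) := by
      have := b.sum_repr w
      calc v = ((∑ i : Fin d, b.repr w i • b i : W) : Fin k → ℝ) := by rw [this]
        _ = ∑ i : Fin d, b.repr w i • ((b i : Fin k → ℝ)) := by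
            push_cast
            rfl
    have hexp : (A ^ n).mulVec v
        = ∑ i : Fin d, b.repr w i • (A ^ n).mulVec ((b i : Fin k → ℝ)) := by
      rw [hrepr]
      have h4 : (A ^ n).mulVec (∑ i : Fin d, b.repr w i • ((b i : Fin k → ℝ)))
          = ((A ^ n).mulVecLin) (∑ i : Fin d, b.repr w i • ((b i : Fin k → ℝ))) := rfl
      rw [h4, map_sum]
      simp [Matrix.mulVecLin_apply, Matrix.mulVec_smul]
    rw [hexp]
    calc ‖∑ i : Fin d, b.repr w i • (A ^ n).mulVec ((b i : Fin k → ℝ))‖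
        ≤ ∑ i : Fin d, ‖b.repr w i • (A ^ n).mulVec ((b i : Fin k → ℝ))‖ :=
          norm_sum_le _ _
      _ ≤ ∑ i : Fin d, C i * ‖(A ^ n).mulVec ((b i : Fin k → ℝ))‖ * ‖v‖ := by
          apply Finset.sum_le_sum
          intro i _
          rw [norm_smul, Real.norm_eq_abs]
          have h1 := hcoord i w
          have h2 : ‖w‖ = ‖v‖ := rfl
          rw [h2] at h1
          have hn : (0:ℝ) ≤ ‖(A ^ n).mulVec ((b i : Fin k → ℝ))‖ := norm_nonneg _
          nlinarith [norm_nonneg v, abs_nonneg (b.repr w i)]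
      _ = g n * ‖v‖ := by rw [hg, Finset.sum_mul]
  -- choose N with g N ≤ 1/2
  obtain ⟨N₀, hN₀⟩ := (Metric.tendsto_atTop.mp hgto) (1/2) (by norm_num)
  set N := max N₀ 1 with hN
  have hN1 : 1 ≤ N := le_max_right _ _
  have hgN : g N ≤ 1/2 := by
    have := hN₀ N (le_max_left _ _)
    rw [Real.dist_eq, sub_zero] at this
    exact le_of_lt (lt_of_le_of_lt (le_abs_self _) this)
  -- contraction along the orbit
  have hcontr : ∀ n : ℕ, ‖(A ^ (N + n)).mulVec u‖ ≤ (1/2) * ‖(A ^ n).mulVec u‖ := by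
    intro n
    have : (A ^ (N + n)).mulVec u = (A ^ N).mulVec ((A ^ n).mulVec u) := by
      rw [Matrix.mulVec_mulVec, ← pow_add]
    rw [this]
    calc ‖(A ^ N).mulVec ((A ^ n).mulVec u)‖
        ≤ g N * ‖(A ^ n).mulVec u‖ := hkey N _ (hmemW n)
      _ ≤ (1/2) * ‖(A ^ n).mulVec u‖ :=
          mul_le_mul_of_nonneg_right hgN (norm_nonneg _)
  -- iterate
  have hiter : ∀ (q s : ℕ), ‖(A ^ (N * q + s)).mulVec u‖ ≤ (1/2)^q * ‖(A ^ s).mulVec u‖ := by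
    intro q
    induction q with
    | zero => intro s; simp
    | succ q ih =>
      intro s
      have heq : N * (q + 1) + s = N + (N * q + s) := by ring
      rw [heq]
      calc ‖(A ^ (N + (N * q + s))).mulVec u‖
          ≤ (1/2) * ‖(A ^ (N * q + s)).mulVec u‖ := hcontr _
        _ ≤ (1/2) * ((1/2)^q * ‖(A ^ s).mulVec u‖) := by
            have := ih s
            nlinarith [norm_nonneg ((A ^ (N * q + s)).mulVec u)]
        _ = (1/2)^(q+1) * ‖(A ^ s).mulVec u‖ := by ring
  -- the rate and constant
  set r : ℝ := (1/2 : ℝ) ^ ((N : ℝ)⁻¹) with hr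
  have hr0 : 0 < r := Real.rpow_pos_of_pos (by norm_num) _
  have hr1 : r < 1 := Real.rpow_lt_one (by norm_num) (by norm_num)
    (by positivity)
  have hrN : r ^ N = 1/2 := by
    rw [hr, ← Real.rpow_natCast ((1/2 : ℝ) ^ ((N : ℝ)⁻¹)) N,
      ← Real.rpow_mul (by norm_num)]
    rw [inv_mul_cancel₀ (by exact_mod_cast Nat.one_le_iff_ne_zero.mp hN1)]
    simp
  set C₀ : ℝ := ∑ s ∈ Finset.range N, ‖(A ^ s).mulVec u‖ with hC₀
  have hC₀0 : 0 ≤ C₀ := Finset.sum_nonneg fun _ _ => norm_nonneg _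
  have hC₀s : ∀ s < N, ‖(A ^ s).mulVec u‖ ≤ C₀ := by
    intro s hs
    exact Finset.single_le_sum (f := fun s => ‖(A ^ s).mulVec u‖)
      (fun _ _ => norm_nonneg _) (Finset.mem_range.mpr hs)
  refine ⟨r, 2 * C₀, le_of_lt hr0, hr1, ?_⟩
  intro n
  have hdm : N * (n / N) + n % N = n := Nat.div_add_mod n N
  have hsN : n % N < N := Nat.mod_lt _ (lt_of_lt_of_le one_pos hN1)
  have h1 : ‖(A ^ n).mulVec u‖ ≤ (1/2)^(n / N) * C₀ := by
    calc ‖(A ^ n).mulVec u‖ = ‖(A ^ (N * (n / N) + n % N)).mulVec u‖ := by rw [hdm]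
      _ ≤ (1/2)^(n / N) * ‖(A ^ (n % N)).mulVec u‖ := hiter _ _
      _ ≤ (1/2)^(n / N) * C₀ := by
          have := hC₀s _ hsN
          have h2 : (0:ℝ) ≤ (1/2 : ℝ)^(n / N) := by positivity
          nlinarith
  have h2 : (1/2 : ℝ)^(n / N) * C₀ ≤ 2 * C₀ * r ^ n := by
    have hrn : r ^ n = (1/2)^(n / N) * r ^ (n % N) := by
      conv_lhs => rw [← hdm]
      rw [pow_add, pow_mul, hrN]
    rw [hrn]
    have hrs : (1/2 : ℝ) ≤ r ^ (n % N) := by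
      rw [← hrN]
      exact pow_le_pow_of_le_one (le_of_lt hr0) (le_of_lt hr1) (le_of_lt hsN)
    have h3 : (0:ℝ) ≤ (1/2 : ℝ)^(n / N) := by positivity
    nlinarith [mul_le_mul_of_nonneg_left hrs (mul_nonneg hC₀0 h3)]
  linarith
end

section
/- Let $(M(n))_{n\ge 1}$ be a sequence of square matrices with integer entries, taking only finitely many values (so all products below are defined), and set $P(n)=M(n)M(n-1)\cdots M(2)$ for $n\ge 2$ (with $P(1)$ the identity). Let $u$ be a real vector such that $\operatorname{dist}(P(n)u,\mathbb{Z}^k)\to 0$ as $n\to\infty$ (i.e., each entry of $P(n)u$ tends to the integers). Then there exist an integer $m$, an integer vector $w$, and a real vector $v$ such that $P(m)u = w + v$ and $\|M(n)\cdots M(m+1)v\|\to 0$ as $n\to\infty$. -/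
open Filter Topology

/-- Let `(M n)` be a sequence of square integer matrices taking only
finitely many values, `P n = M n ⋯ M 2` (with `P 1 = 1`), and `u` a real vector with
`dist(Pₙ u, ℤ^k) → 0`. Then there are `m`, an integer vector `w` and a real vector `v`
with `Pₘ u = w + v` and `‖M n ⋯ M (m+1) v‖ → 0`. -/
theorem integer_plus_decaying_decomposition
    {k : ℕ} (M : ℕ → Matrix (Fin k) (Fin k) ℤ) (hfin : (Set.range M).Finite)
    (P : ℕ → Matrix (Fin k) (Fin k) ℤ) (hP1 : P 1 = 1)
    (hPrec : ∀ n : ℕ, 1 ≤ n → P (n+1) = M (n+1) * P n)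
    (Q : ℕ → ℕ → Matrix (Fin k) (Fin k) ℤ)
    (hQ0 : ∀ m : ℕ, Q m m = 1)
    (hQrec : ∀ m n : ℕ, m ≤ n → Q m (n+1) = M (n+1) * Q m n)
    (u : Fin k → ℝ)
    (hu : Tendsto (fun n : ℕ =>
        ⨆ j : Fin k, |((P n).map (Int.cast : ℤ → ℝ)).mulVec u j -
          (round (((P n).map (Int.cast : ℤ → ℝ)).mulVec u j) : ℝ)|)
      atTop (nhds 0)) :
    ∃ (m : ℕ) (w : Fin k → ℤ) (v : Fin k → ℝ), 1 ≤ m ∧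
      ((P m).map (Int.cast : ℤ → ℝ)).mulVec u = (fun j => (w j : ℝ)) + v ∧
      Tendsto (fun n : ℕ => ‖((Q m n).map (Int.cast : ℤ → ℝ)).mulVec v‖)
        atTop (nhds 0) := by
  set x : ℕ → Fin k → ℝ := fun n => ((P n).map (Int.cast : ℤ → ℝ)).mulVec u with hx
  set e : ℕ → Fin k → ℝ := fun n j => x n j - (round (x n j) : ℝ) with he
  set S : ℕ → ℝ := fun n => ⨆ j : Fin k, |e n j| with hS
  have hSu : Tendsto S atTop (nhds 0) := hu
  have hle : ∀ n (j : Fin k), |e n j| ≤ S n := fun n j =>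
    le_ciSup (f := fun j => |e n j|) (Set.Finite.bddAbove (Set.finite_range _)) j
  have hS0 : ∀ n, 0 ≤ S n := fun n => Real.iSup_nonneg (fun j => abs_nonneg _)
  -- constant bounding the matrices
  set g : ℕ → ℝ := fun n => ∑ i : Fin k, ∑ j : Fin k, (|M n i j| : ℝ) with hg
  obtain ⟨C, hC⟩ : ∃ C : ℝ, ∀ n, g n ≤ C := by
    have hfin2 : (Set.range g).Finite := by
      have : Set.range g ⊆ (fun A : Matrix (Fin k) (Fin k) ℤ =>
          ∑ i : Fin k, ∑ j : Fin k, (|A i j| : ℝ)) '' (Set.range M) := by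
        rintro _ ⟨n, rfl⟩; exact ⟨M n, ⟨n, rfl⟩, rfl⟩
      exact (hfin.image _).subset this
    obtain ⟨C, hC⟩ := hfin2.bddAbove
    exact ⟨C, fun n => hC ⟨n, rfl⟩⟩
  have hg0 : ∀ n, 0 ≤ g n := fun n =>
    Finset.sum_nonneg fun i _ => Finset.sum_nonneg fun j _ => by positivity
  have hC0 : 0 ≤ C := le_trans (hg0 0) (hC 0)
  -- bound on mulVec
  have hmv : ∀ n (y : Fin k → ℝ) (b : ℝ), 0 ≤ b → (∀ j, |y j| ≤ b) →
      ∀ i, |((M n).map (Int.cast : ℤ → ℝ)).mulVec y i| ≤ g n * b := by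
    intro n y b hb hy i
    have h1 : |((M n).map (Int.cast : ℤ → ℝ)).mulVec y i|
        ≤ ∑ j : Fin k, (|M n i j| : ℝ) * b := by
      simp only [Matrix.mulVec, dotProduct]
      refine le_trans (Finset.abs_sum_le_sum_abs _ _) ?_
      refine Finset.sum_le_sum fun j _ => ?_
      rw [abs_mul, Matrix.map_apply]
      push_cast
      exact mul_le_mul (le_refl _) (hy j) (abs_nonneg _) (abs_nonneg _)
    refine h1.trans ?_
    rw [← Finset.sum_mul]
    refine mul_le_mul_of_nonneg_right ?_ hb
    exact Finset.single_le_sum (f := fun i => ∑ j : Fin k, (|M n i j| : ℝ))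
      (fun i _ => Finset.sum_nonneg fun j _ => by positivity) (Finset.mem_univ i)
  have hmapmul : ∀ A B : Matrix (Fin k) (Fin k) ℤ,
      (A * B).map (Int.cast : ℤ → ℝ) = A.map Int.cast * B.map Int.cast := by
    intro A B
    ext i j
    simp [Matrix.mul_apply]
  set ε : ℝ := (2 * (C + 1))⁻¹ with hε
  have hεpos : 0 < ε := by positivity
  obtain ⟨N, hN⟩ : ∃ N, ∀ n ≥ N, S n < ε :=
    Filter.eventually_atTop.mp (hSu.eventually (gt_mem_nhds hεpos))
  set m : ℕ := max N 1 with hm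
  have hm1 : 1 ≤ m := le_max_right _ _
  -- key step
  have hstep : ∀ n, m ≤ n → e (n+1) = ((M (n+1)).map (Int.cast : ℤ → ℝ)).mulVec (e n) := by
    intro n hn
    have hn1 : 1 ≤ n := le_trans (le_max_right _ _) hn
    have hxs : x (n+1) = ((M (n+1)).map (Int.cast : ℤ → ℝ)).mulVec (x n) := by
      rw [hx]
      simp only []
      rw [hPrec n hn1, hmapmul, ← Matrix.mulVec_mulVec]
    set z : Fin k → ℤ := fun j =>
      (M (n+1)).mulVec (fun i => round (x n i)) j - round (x (n+1) j) with hz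
    have hd : ∀ j, e (n+1) j - ((M (n+1)).map (Int.cast : ℤ → ℝ)).mulVec (e n) j = (z j : ℝ) := by
      intro j
      have h2 : ((M (n+1)).map (Int.cast : ℤ → ℝ)).mulVec (e n) j
          = ((M (n+1)).map (Int.cast : ℤ → ℝ)).mulVec (x n) j
            - (((M (n+1)).mulVec (fun i => round (x n i)) j : ℤ) : ℝ) := by
        simp only [Matrix.mulVec, dotProduct, Matrix.map_apply, he]
        push_cast
        rw [← Finset.sum_sub_distrib]
        congr 1; ext i; ring
      rw [h2, hz]
      simp only [he]
      rw [hxs]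
      push_cast
      ring
    have hz0 : ∀ j, z j = 0 := by
      intro j
      have habs : |(z j : ℝ)| < 1 := by
        rw [← hd j]
        have h1 : |e (n+1) j| < ε := lt_of_le_of_lt (hle _ j)
          (hN (n+1) (le_trans (le_trans (le_max_left _ _) hn) (Nat.le_succ n)))
        have h2 : |((M (n+1)).map (Int.cast : ℤ → ℝ)).mulVec (e n) j| ≤ g (n+1) * ε := by
          refine hmv (n+1) (e n) ε hεpos.le (fun i => ?_) j
          exact le_of_lt (lt_of_le_of_lt (hle n i) (hN n (le_trans (le_max_left _ _) hn)))
        calc |e (n+1) j - ((M (n+1)).map (Int.cast : ℤ → ℝ)).mulVec (e n) j|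
            ≤ |e (n+1) j| + |((M (n+1)).map (Int.cast : ℤ → ℝ)).mulVec (e n) j| :=
              abs_sub _ _
          _ < ε + g (n+1) * ε := by
              exact add_lt_add_of_lt_of_le h1 h2
          _ ≤ ε + C * ε := by
              exact add_le_add (le_refl _) (mul_le_mul_of_nonneg_right (hC _) hεpos.le)
          _ = (1 + C) * ε := by ring
          _ < 1 := by
              rw [hε]
              rw [mul_inv_lt_iff₀ (by positivity)]
              nlinarith
      have h3 : |z j| < 1 := by exact_mod_cast habs
      rwa [Int.abs_lt_one_iff] at h3
    funext j
    have := hd j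
    rw [hz0 j] at this
    push_cast at this
    linarith
  -- Q transports e m to e n
  have hQe : ∀ n, m ≤ n → ((Q m n).map (Int.cast : ℤ → ℝ)).mulVec (e m) = e n := by
    intro n hn
    induction n, hn using Nat.le_induction with
    | base =>
        rw [hQ0]
        simp [Matrix.map_one]
    | succ n hn ih =>
        rw [hQrec m n hn, hmapmul, ← Matrix.mulVec_mulVec, ih, hstep n hn]
  refine ⟨m, fun j => round (x m j), e m, hm1, ?_, ?_⟩
  · funext j
    simp [he, Pi.add_apply]
    rfl
  · have h1 : Tendsto (fun n => ‖e n‖) atTop (nhds 0) := by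
      refine tendsto_of_tendsto_of_tendsto_of_le_of_le tendsto_const_nhds hSu
        (fun n => norm_nonneg _) (fun n => ?_)
      rw [pi_norm_le_iff_of_nonneg (hS0 n)]
      intro j
      exact hle n j
    refine Tendsto.congr' ?_ (h1.comp (tendsto_id))
    filter_upwards [eventually_ge_atTop m] with n hn
    rw [hQe n hn]
    rfl
end

section
/- Let $(X,T)$ be a linearly recurrent minimal Cantor system with constant $L$, given by a nested sequence of clopen Kakutani–Rokhlin partitions $\mathcal{P}(n)$ with $C(n)$ towers of heights $h_k(n)$ satisfying (KR1)–(KR6) and (LR). Then for every $n\in\mathbb{N}$ we have $C(n)\le L$. -/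
open MeasureTheory Filter Topology

/-- A nested sequence of clopen Kakutani–Rokhlin partitions of `(X,T)`,
satisfying (KR1)-(KR6) and the linear recurrence condition (LR) with constant `L`.
The pieces of the `n`-th partition are the sets `T^{-j}(base n k)` for
`k : Fin (C n)` and `j < hgt n k`. -/
structure LRCantor (X : Type*) [TopologicalSpace X] (T : X ≃ₜ X) (L : ℕ) : Type _ where
  C : ℕ → ℕ
  hgt : (n : ℕ) → Fin (C n) → ℕ
  base : (n : ℕ) → Fin (C n) → Set X
  C_pos : ∀ n, 0 < C n
  hgt_pos : ∀ n k, 0 < hgt n k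
  clopen : ∀ n k, IsClopen (base n k)
  C_zero : C 0 = 1
  hgt_zero : ∀ k, hgt 0 k = 1
  base_zero : ∀ k, base 0 k = Set.univ
  pieces_disjoint : ∀ n (k k' : Fin (C n)) (j j' : ℕ), j < hgt n k → j' < hgt n k' →
    (k, j) ≠ (k', j') → Disjoint ((⇑T)^[j] ⁻¹' base n k) ((⇑T)^[j'] ⁻¹' base n k')
  pieces_cover : ∀ n (x : X), ∃ (k : Fin (C n)) (j : ℕ), j < hgt n k ∧ (⇑T)^[j] x ∈ base n k
  KR1 : ∀ n, (⋃ k, base (n+1) k) ⊆ ⋃ k, base n k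
  KR2 : ∀ n (k : Fin (C (n+1))) (j : ℕ), j < hgt (n+1) k →
    ∃ (k' : Fin (C n)) (j' : ℕ), j' < hgt n k' ∧
      (⇑T)^[j] ⁻¹' base (n+1) k ⊆ (⇑T)^[j'] ⁻¹' base n k'
  KR3 : ∃ x : X, (⋂ n, ⋃ k, base n k) = {x}
  KR4 : ∀ (U : Set X) (x : X), IsOpen U → x ∈ U →
    ∃ (n : ℕ) (k : Fin (C n)) (j : ℕ), j < hgt n k ∧ x ∈ (⇑T)^[j] ⁻¹' base n k ∧
      (⇑T)^[j] ⁻¹' base n k ⊆ U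
  KR5 : ∀ n (l : Fin (C (n+1))) (k : Fin (C n)),
    ∃ j, j < hgt (n+1) l ∧ (⇑T)^[j] ⁻¹' base (n+1) l ⊆ base n k
  KR6 : ∀ n, (⋃ k, base (n+1) k) ⊆ base n ⟨0, C_pos n⟩
  LR : ∀ n (l : Fin (C (n+1))) (k : Fin (C n)), hgt (n+1) l ≤ L * hgt n k

namespace LRCantor

variable {X : Type*} [TopologicalSpace X] {T : X ≃ₜ X} {L : ℕ}

/-- The incidence numbers `m_{l,k}(n+1)` of the sequence of partitions. -/
noncomputable def m (S : LRCantor X T L) (n : ℕ) (l : Fin (S.C (n+1))) (k : Fin (S.C n)) : ℕ :=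
  Set.ncard {j : ℕ | j < S.hgt (n+1) l ∧ (⇑T)^[j] ⁻¹' S.base (n+1) l ⊆ S.base n k}

end LRCantor

/-- `lam` is a continuous eigenvalue of `(X,T)`. -/
def IsContinuousEigenvalue {X : Type*} [TopologicalSpace X] (T : X ≃ₜ X) (lam : ℂ) : Prop :=
  ∃ f : X → ℂ, Continuous f ∧ f ≠ 0 ∧ ∀ x, f (T x) = lam * f x

/-- `lam` is a measure-theoretical eigenvalue of `(X,T,μ)`. -/
def IsEigenvalue {X : Type*} [TopologicalSpace X] [MeasurableSpace X] (T : X ≃ₜ X)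
    (μ : Measure X) (lam : ℂ) : Prop :=
  ∃ f : X → ℂ, MemLp f 2 μ ∧ ¬ (f =ᵐ[μ] 0) ∧
    (fun x => f (T x)) =ᵐ[μ] fun x => lam * f x

/-- `(X,T)` is a minimal homeomorphism: the only closed invariant subsets are `∅` and `X`. -/
def IsMinimal {X : Type*} [TopologicalSpace X] (T : X ≃ₜ X) : Prop :=
  ∀ A : Set X, IsClosed A → (⇑T) '' A = A → A = ∅ ∨ A = Set.univ

variable {X : Type*} [TopologicalSpace X] [CompactSpace X] [TopologicalSpace.MetrizableSpace X]
  [TotallyDisconnectedSpace X] [PerfectSpace X] [Nonempty X]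
lemma aux_key {X : Type*} [TopologicalSpace X] [Nonempty X] {T : X ≃ₜ X} {L : ℕ}
    (S : LRCantor X T L) (n : ℕ) : S.C n ≤ L := by
  obtain ⟨z⟩ := ‹Nonempty X›
  obtain ⟨l, j0, hj0, hx⟩ := S.pieces_cover (n+1) z
  set x : X := (⇑T)^[j0] z with hxdef
  set H := S.hgt (n+1) l with hHdef
  set y : ℕ → X := fun j => (⇑T.symm)^[j] x with hydef
  have hy : ∀ j i, (⇑T)^[i] (y (j + i)) = y j := by
    intro j i
    show (⇑T)^[i] ((⇑T.symm)^[j + i] x) = (⇑T.symm)^[j] x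
    rw [add_comm, Function.iterate_add_apply]
    exact (Function.LeftInverse.iterate T.apply_symm_apply i) _
  have hy0 : y 0 = x := rfl
  have uniq : ∀ (m : ℕ) (w : X) (k k' : Fin (S.C m)) (i i' : ℕ), i < S.hgt m k →
      i' < S.hgt m k' → (⇑T)^[i] w ∈ S.base m k → (⇑T)^[i'] w ∈ S.base m k' →
      ((k, i) : Fin (S.C m) × ℕ) = (k', i') := by
    intro m w k k' i i' hi hi' h1 h2
    by_contra hne
    exact Set.disjoint_left.mp (S.pieces_disjoint m k k' i i' hi hi' hne) h1 h2
  have hxl : ∀ j, (⇑T)^[j] (y j) ∈ S.base (n+1) l := by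
    intro j
    have := hy 0 j
    rw [zero_add] at this
    rw [this, hy0]; exact hx
  have hH1 : 0 < H := S.hgt_pos (n+1) l
  -- the point y H lies in a base of level n+1
  obtain ⟨l', j'', hj'', hmem⟩ := S.pieces_cover (n+1) (y H)
  have hj''0 : j'' = 0 := by
    by_contra h0
    obtain ⟨j1, rfl⟩ : ∃ j1, j'' = j1 + 1 :=
      ⟨j'' - 1, (Nat.succ_pred_eq_of_pos (Nat.pos_of_ne_zero h0)).symm⟩
    have e0 : (⇑T)^[1] (y H) = y (H - 1) := by
      have := hy (H - 1) 1
      rwa [Nat.sub_add_cancel hH1] at this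
    have e1 : (⇑T)^[j1] (y (H - 1)) ∈ S.base (n+1) l' := by
      rw [← e0, ← Function.iterate_add_apply]
      exact hmem
    have e2 : (⇑T)^[H - 1] (y (H - 1)) ∈ S.base (n+1) l := hxl (H - 1)
    have hpair := uniq (n+1) (y (H - 1)) l' l j1 (H - 1) (by omega) (by omega) e1 e2
    have hl : l' = l := (Prod.mk.injEq _ _ _ _ ▸ hpair).1
    have hjj : j1 = H - 1 := (Prod.mk.injEq _ _ _ _ ▸ hpair).2
    rw [hl] at hj''
    omega
  subst hj''0
  have hbase' : y H ∈ S.base (n+1) l' := hmem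
  have hyH : y H ∈ ⋃ k, S.base n k := S.KR1 n (Set.mem_iUnion.mpr ⟨l', hbase'⟩)
  obtain ⟨k'', hk''⟩ := Set.mem_iUnion.mp hyH
  -- entry times from KR5
  choose jk hjk1 hjk2 using S.KR5 n l
  have hjmem : ∀ k : Fin (S.C n), y (jk k) ∈ S.base n k := by
    intro k
    exact hjk2 k (hxl (jk k))
  have hbnd : ∀ k : Fin (S.C n), jk k + S.hgt n k ≤ H := by
    intro k
    by_contra h
    have hjkH := hjk1 k
    set i := H - jk k with hidef
    have hi1 : 0 < i := by omega
    have hi2 : i < S.hgt n k := by have := hjk1 k; omega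
    have m1 : (⇑T)^[i] (y H) ∈ S.base n k := by
      have := hy (jk k) i
      rw [show jk k + i = H by have := hjk1 k; omega] at this
      rw [this]; exact hjmem k
    have m2 : (⇑T)^[0] (y H) ∈ S.base n k'' := hk''
    have := uniq n (y H) k k'' i 0 hi2 (S.hgt_pos n k'') m1 m2
    have : i = 0 := ((Prod.mk.injEq _ _ _ _ ▸ this).2 : i = 0)
    omega
  -- the injection
  have hinj : Function.Injective (fun p : Σ k : Fin (S.C n), Fin (S.hgt n k) =>
      (⟨jk p.1 + (p.2 : ℕ), by
        have := hbnd p.1; have := p.2.2; omega⟩ : Fin H)) := by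
    rintro ⟨k, i⟩ ⟨k', i'⟩ hpq
    have hval : jk k + (i : ℕ) = jk k' + (i' : ℕ) := congrArg Fin.val hpq
    have m1 : (⇑T)^[(i : ℕ)] (y (jk k + (i : ℕ))) ∈ S.base n k := by
      rw [hy]; exact hjmem k
    have m2 : (⇑T)^[(i' : ℕ)] (y (jk k + (i : ℕ))) ∈ S.base n k' := by
      rw [hval, hy]; exact hjmem k'
    have hpair := uniq n _ k k' (i : ℕ) (i' : ℕ) i.2 i'.2 m1 m2
    have hk : k = k' := (Prod.mk.injEq _ _ _ _ ▸ hpair).1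
    have hv : (i : ℕ) = (i' : ℕ) := (Prod.mk.injEq _ _ _ _ ▸ hpair).2
    subst hk
    simp [Fin.ext_iff, hv]
  have hcard : ∑ k : Fin (S.C n), S.hgt n k ≤ H := by
    have := Fintype.card_le_of_injective _ hinj
    simpa [Fintype.card_sigma] using this
  -- minimal height tower
  obtain ⟨k₀, -, hk₀⟩ := Finset.exists_min_image Finset.univ (S.hgt n)
    ⟨⟨0, S.C_pos n⟩, Finset.mem_univ _⟩
  have hlow : S.C n * S.hgt n k₀ ≤ ∑ k : Fin (S.C n), S.hgt n k := by
    calc S.C n * S.hgt n k₀ = ∑ _k : Fin (S.C n), S.hgt n k₀ := by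
          simp [Finset.sum_const, mul_comm]
      _ ≤ ∑ k : Fin (S.C n), S.hgt n k :=
          Finset.sum_le_sum (fun k _ => hk₀ k (Finset.mem_univ k))
  have hup : H ≤ L * S.hgt n k₀ := S.LR n l k₀
  exact Nat.le_of_mul_le_mul_right (le_trans hlow (le_trans hcard hup)) (S.hgt_pos n k₀)

/-- In a linearly recurrent minimal Cantor system with constant `L`,
the number of towers satisfies `C(n) ≤ L` for every `n`. -/
theorem numTowers_le_of_linearlyRecurrent
    (T : X ≃ₜ X) (hmin : IsMinimal T) {L : ℕ} (S : LRCantor X T L) :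
    ∀ n : ℕ, S.C n ≤ L :=
  fun n => aux_key S n
end

section
/- Let $(X,T)$ be a linearly recurrent minimal Cantor system with constant $L$. Then for every $n\in\mathbb{N}$ and all $1\le k,k'\le C(n)$, the heights satisfy $h_k(n)\le L\, h_{k'}(n)$. -/
open MeasureTheory Filter Topology

variable {X : Type*} [TopologicalSpace X] [CompactSpace X] [TopologicalSpace.MetrizableSpace X]
  [TotallyDisconnectedSpace X] [PerfectSpace X] [Nonempty X]
/-- Every base of every tower is nonempty. -/
lemma LRCantor.base_nonempty {T : X ≃ₜ X} {L : ℕ} (S : LRCantor X T L)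
    (n : ℕ) (k : Fin (S.C n)) : (S.base n k).Nonempty := by
  obtain ⟨x⟩ := (inferInstance : Nonempty X)
  obtain ⟨k₀, j₀, hj₀, hx⟩ := S.pieces_cover (n+1) x
  obtain ⟨j, hj, hsub⟩ := S.KR5 n k₀ k
  have hsurj : Function.Surjective ((⇑T)^[j]) :=
    Function.Surjective.iterate T.surjective j
  have hBne : (S.base (n+1) k₀).Nonempty := ⟨(⇑T)^[j₀] x, hx⟩
  exact (hBne.preimage hsurj).mono hsub

/-- Heights grow from one level to the next. -/
lemma LRCantor.hgt_le_hgt_succ {T : X ≃ₜ X} {L : ℕ} (S : LRCantor X T L)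
    (n : ℕ) (l : Fin (S.C (n+1))) (k : Fin (S.C n)) :
    S.hgt n k ≤ S.hgt (n+1) l := by
  obtain ⟨j, hj, hsub⟩ := S.KR5 n l k
  by_contra hlt
  push_neg at hlt
  set h := S.hgt (n+1) l with hh
  have hpos : 0 < h := S.hgt_pos (n+1) l
  set i := h - j with hi
  have hij : j + i = h := by omega
  have hipos : 1 ≤ i := by omega
  have hik : i < S.hgt n k := by omega
  -- pieces propagate upward
  have hsub2 : (⇑T)^[h] ⁻¹' S.base (n+1) l ⊆ (⇑T)^[i] ⁻¹' (S.base n k) := by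
    intro x hx
    have : (⇑T)^[j] ((⇑T)^[i] x) ∈ S.base (n+1) l := by
      rw [← Function.iterate_add_apply, hij]; exact hx
    exact hsub this
  obtain ⟨y, hy⟩ := S.base_nonempty (n+1) l
  obtain ⟨z, hz⟩ := (Function.Surjective.iterate T.surjective h) y
  have hzk : z ∈ (⇑T)^[i] ⁻¹' (S.base n k) := hsub2 (by simpa [hz] using hy)
  obtain ⟨k₂, j₂, hj₂, hzk₂⟩ := S.pieces_cover (n+1) z
  rcases Nat.eq_zero_or_pos j₂ with hj₂0 | hj₂1
  · -- z is in a base of level n+1, hence in base n ⟨0⟩; contradicts z ∈ piece (k, i), i ≥ 1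
    subst hj₂0
    have hz0 : z ∈ S.base n ⟨0, S.C_pos n⟩ := by
      apply S.KR6 n
      exact Set.mem_iUnion.2 ⟨k₂, by simpa using hzk₂⟩
    have hdisj := S.pieces_disjoint n ⟨0, S.C_pos n⟩ k 0 i (S.hgt_pos n _) hik
      (by simp; omega)
    have : z ∈ ((⇑T)^[0] ⁻¹' S.base n ⟨0, S.C_pos n⟩) := by simpa using hz0
    exact (Set.disjoint_left.1 hdisj this) hzk
  · -- T z is both the top piece of tower l and piece (k₂, j₂ - 1); forces j₂ = h
    have hTz_l : T z ∈ (⇑T)^[h-1] ⁻¹' S.base (n+1) l := by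
      have : (⇑T)^[h-1] (T z) = (⇑T)^[h] z := by
        rw [← Function.iterate_succ_apply]
        congr 1
        omega
      simp only [Set.mem_preimage, this, hz]
      exact hy
    have hTz_k₂ : T z ∈ (⇑T)^[j₂-1] ⁻¹' S.base (n+1) k₂ := by
      have : (⇑T)^[j₂-1] (T z) = (⇑T)^[j₂] z := by
        rw [← Function.iterate_succ_apply]
        congr 1
        omega
      simp only [Set.mem_preimage, this]
      exact hzk₂
    by_cases heq : (l, h-1) = (k₂, j₂-1)
    · have hl : l = k₂ := (Prod.mk.injEq _ _ _ _ ▸ heq).1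
      have hjj : h - 1 = j₂ - 1 := (Prod.mk.injEq _ _ _ _ ▸ heq).2
      have : j₂ = h := by omega
      subst hl
      omega
    · have hdisj := S.pieces_disjoint (n+1) l k₂ (h-1) (j₂-1)
        (by omega) (by omega) heq
      exact (Set.disjoint_left.1 hdisj hTz_l) hTz_k₂

/-- In a linearly recurrent minimal Cantor system with constant `L`,
the heights at a given level are comparable: `h_k(n) ≤ L · h_{k'}(n)`. -/
theorem heights_comparable_of_linearlyRecurrent
    (T : X ≃ₜ X) (hmin : IsMinimal T) {L : ℕ} (S : LRCantor X T L) :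
    ∀ (n : ℕ) (k k' : Fin (S.C n)), S.hgt n k ≤ L * S.hgt n k' := by
  -- first, L ≥ 1
  have hL : 1 ≤ L := by
    have l₁ : Fin (S.C 1) := ⟨0, S.C_pos 1⟩
    have k₀ : Fin (S.C 0) := ⟨0, S.C_pos 0⟩
    have h2 : S.hgt 1 l₁ ≤ L := by simpa [S.hgt_zero] using S.LR 0 l₁ k₀
    have h1 := S.hgt_pos 1 l₁
    omega
  intro n k k'
  cases n with
  | zero =>
    rw [S.hgt_zero k, S.hgt_zero k']
    omega
  | succ m =>
    calc S.hgt (m+1) k ≤ L * S.hgt m ⟨0, S.C_pos m⟩ := S.LR m k ⟨0, S.C_pos m⟩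
      _ ≤ L * S.hgt (m+1) k' :=
        Nat.mul_le_mul_left L (S.hgt_le_hgt_succ m k' ⟨0, S.C_pos m⟩)
end

section
/- Let $(X,T)$ be a linearly recurrent minimal Cantor system with constant $L$ given by a nested sequence of CKR partitions, and let $\mu$ be a $T$-invariant Borel probability measure. Then for every $n\in\mathbb{N}$ and every $1\le k\le C(n)$, we have $h_k(n)\,\mu(B_k(n))\ge 1/L$. -/
open MeasureTheory Filter Topology
open scoped ENNReal

variable {X : Type*} [TopologicalSpace X] [CompactSpace X] [TopologicalSpace.MetrizableSpace X]
  [TotallyDisconnectedSpace X] [PerfectSpace X] [Nonempty X]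
variable [MeasurableSpace X] [BorelSpace X]

lemma LRCantor.meas_preimage' {L : ℕ} {T : X ≃ₜ X} (S : LRCantor X T L)
    {μ : Measure X} (hinv : MeasurePreserving T μ μ) (n : ℕ) (k : Fin (S.C n)) (j : ℕ) :
    μ ((⇑T)^[j] ⁻¹' S.base n k) = μ (S.base n k) :=
  (hinv.iterate j).measure_preimage (S.clopen n k).isOpen.measurableSet.nullMeasurableSet

lemma LRCantor.meas_piece {L : ℕ} {T : X ≃ₜ X} (S : LRCantor X T L)
    (n : ℕ) (k : Fin (S.C n)) (j : ℕ) :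
    MeasurableSet ((⇑T)^[j] ⁻¹' S.base n k) :=
  (S.clopen n k).isOpen.measurableSet.preimage (T.continuous.iterate j).measurable

lemma LRCantor.sum_eq_one {L : ℕ} {T : X ≃ₜ X} (S : LRCantor X T L)
    {μ : Measure X} [IsProbabilityMeasure μ] (hinv : MeasurePreserving T μ μ) (m : ℕ) :
    ∑ k : Fin (S.C m), (S.hgt m k : ℝ≥0∞) * μ (S.base m k) = 1 := by
  set A : (Σ k : Fin (S.C m), Fin (S.hgt m k)) → Set X :=
    fun p => (⇑T)^[p.2] ⁻¹' S.base m p.1 with hA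
  have hcover : ⋃ p, A p = Set.univ := by
    ext x
    simp only [Set.mem_iUnion, Set.mem_univ, iff_true]
    obtain ⟨k, j, hj, hx⟩ := S.pieces_cover m x
    exact ⟨⟨k, ⟨j, hj⟩⟩, hx⟩
  have hdisj : Pairwise (Function.onFun Disjoint A) := by
    intro p q hpq
    refine S.pieces_disjoint m p.1 q.1 p.2 q.2 p.2.2 q.2.2 ?_
    intro h
    obtain ⟨k₁, j₁⟩ := p; obtain ⟨k₂, j₂⟩ := q
    obtain ⟨h1, h2⟩ := Prod.mk.injEq .. ▸ h
    subst h1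
    exact hpq (congrArg (Sigma.mk k₁) (Fin.ext h2))
  have h1 : μ (⋃ p, A p) = ∑' p, μ (A p) :=
    measure_iUnion hdisj fun p => S.meas_piece m p.1 p.2
  rw [hcover, measure_univ, tsum_fintype] at h1
  have h2 : ∀ p : (Σ k : Fin (S.C m), Fin (S.hgt m k)), μ (A p) = μ (S.base m p.1) :=
    fun p => S.meas_preimage' hinv m p.1 p.2
  calc ∑ k : Fin (S.C m), (S.hgt m k : ℝ≥0∞) * μ (S.base m k)
      = ∑ k : Fin (S.C m), ∑ _j : Fin (S.hgt m k), μ (S.base m k) := by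
        simp [Finset.sum_const, mul_comm]
    _ = ∑ p : (Σ k : Fin (S.C m), Fin (S.hgt m k)), μ (A p) := by
        rw [← Finset.univ_sigma_univ, Finset.sum_sigma]
        exact Finset.sum_congr rfl fun k _ => Finset.sum_congr rfl fun j _ => (h2 ⟨k, j⟩).symm
    _ = 1 := h1.symm

lemma LRCantor.sum_succ_le {L : ℕ} {T : X ≃ₜ X} (S : LRCantor X T L)
    {μ : Measure X} [IsProbabilityMeasure μ] (hinv : MeasurePreserving T μ μ)
    (n : ℕ) (k : Fin (S.C n)) :
    ∑ l : Fin (S.C (n+1)), μ (S.base (n+1) l) ≤ μ (S.base n k) := by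
  choose j hj hsub using fun l => S.KR5 n l k
  set A : Fin (S.C (n+1)) → Set X := fun l => (⇑T)^[j l] ⁻¹' S.base (n+1) l with hA
  have hdisj : Pairwise (Function.onFun Disjoint A) := fun l l' hll' =>
    S.pieces_disjoint (n+1) l l' (j l) (j l') (hj l) (hj l')
      (fun h => hll' (congrArg Prod.fst h))
  calc ∑ l, μ (S.base (n+1) l) = ∑ l, μ (A l) := by
        exact Finset.sum_congr rfl fun l _ => (S.meas_preimage' hinv (n+1) l (j l)).symm
    _ = μ (⋃ l, A l) := by
        rw [measure_iUnion hdisj fun l => S.meas_piece (n+1) l (j l), tsum_fintype]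
    _ ≤ μ (S.base n k) := measure_mono (Set.iUnion_subset hsub)

/-- For any invariant probability measure `μ` of a linearly recurrent
minimal Cantor system with constant `L`, one has `h_k(n) · μ(B_k(n)) ≥ 1/L`. -/
theorem measure_tower_ge_of_linearlyRecurrent
    (T : X ≃ₜ X) (hmin : IsMinimal T) {L : ℕ} (S : LRCantor X T L)
    (μ : Measure X) [IsProbabilityMeasure μ] (hinv : MeasurePreserving T μ μ) :
    ∀ (n : ℕ) (k : Fin (S.C n)),
      (1 : ℝ) / L ≤ (S.hgt n k : ℝ) * (μ (S.base n k)).toReal := by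
  intro n k
  rcases Nat.eq_zero_or_pos L with hL | hL
  · subst hL
    simp only [Nat.cast_zero, div_zero]
    positivity
  have hL' : (0 : ℝ) < L := by exact_mod_cast hL
  have h1 := S.sum_eq_one hinv (n+1)
  have h2 := S.sum_succ_le hinv n k
  have hfin : ∀ (m : ℕ) (k : Fin (S.C m)), (S.hgt m k : ℝ≥0∞) * μ (S.base m k) ≠ ⊤ :=
    fun m k => ENNReal.mul_ne_top (ENNReal.natCast_ne_top _) (measure_ne_top μ _)
  have h1' : ∑ l : Fin (S.C (n+1)), (S.hgt (n+1) l : ℝ) * (μ (S.base (n+1) l)).toReal = 1 := by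
    have := congrArg ENNReal.toReal h1
    rw [ENNReal.toReal_sum (fun l _ => hfin (n+1) l), ENNReal.toReal_one] at this
    simpa [ENNReal.toReal_mul] using this
  have h2' : ∑ l : Fin (S.C (n+1)), (μ (S.base (n+1) l)).toReal ≤ (μ (S.base n k)).toReal := by
    rw [← ENNReal.toReal_sum (fun l _ => measure_ne_top μ _)]
    exact ENNReal.toReal_mono (measure_ne_top μ _) h2
  have key : ∀ l : Fin (S.C (n+1)), (S.hgt (n+1) l : ℝ) * (μ (S.base (n+1) l)).toReal
      ≤ (L : ℝ) * ((S.hgt n k : ℝ) * (μ (S.base (n+1) l)).toReal) := by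
    intro l
    have hlr : (S.hgt (n+1) l : ℝ) ≤ (L : ℝ) * S.hgt n k := by exact_mod_cast S.LR n l k
    have hnn : (0 : ℝ) ≤ (μ (S.base (n+1) l)).toReal := ENNReal.toReal_nonneg
    nlinarith
  calc (1 : ℝ) / L
      = (1/L) * ∑ l : Fin (S.C (n+1)), (S.hgt (n+1) l : ℝ) * (μ (S.base (n+1) l)).toReal := by
        rw [h1']; ring
    _ ≤ (1/L) * ∑ l : Fin (S.C (n+1)),
          (L : ℝ) * ((S.hgt n k : ℝ) * (μ (S.base (n+1) l)).toReal) :=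
        mul_le_mul_of_nonneg_left (Finset.sum_le_sum fun l _ => key l) (by positivity)
    _ = (S.hgt n k : ℝ) * ∑ l : Fin (S.C (n+1)), (μ (S.base (n+1) l)).toReal := by
        rw [← Finset.mul_sum, ← Finset.mul_sum]
        field_simp
    _ ≤ (S.hgt n k : ℝ) * (μ (S.base n k)).toReal :=
        mul_le_mul_of_nonneg_left h2' (by positivity)
end

section
/- No linearly recurrent minimal Cantor system is strongly mixing with respect to its unique invariant measure. More precisely, if $(X,T,\mu)$ is linearly recurrent with constant $L$ and $m$ is chosen so that $\mu(B_1(m))<1/L^2$, then $\liminf_{n\to\infty}\mu\big(B_1(m)\cap T^{h_1(n)}B_1(m)\big)\ge \frac{1}{L^2}\mu(B_1(m)) > \mu(B_1(m))^2$. -/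
open MeasureTheory Filter Topology

variable {X : Type*} [TopologicalSpace X] [CompactSpace X] [TopologicalSpace.MetrizableSpace X]
  [TotallyDisconnectedSpace X] [PerfectSpace X] [Nonempty X]
variable [MeasurableSpace X] [BorelSpace X]


/-! ### Auxiliary development for Statement 6 -/

namespace NSM

open Set MeasureTheory
open scoped Classical ENNReal

variable {X : Type*} [TopologicalSpace X] {T : X ≃ₜ X} {L : ℕ}

lemma iter_cont (T : X ≃ₜ X) (j : ℕ) : Continuous ((⇑T)^[j]) := by
  induction j with
  | zero => simpa using continuous_id
  | succ n ih => rw [Function.iterate_succ]; exact ih.comp T.continuous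

lemma iter_right_inv (T : X ≃ₜ X) (j : ℕ) (y : X) : (⇑T)^[j] ((⇑T.symm)^[j] y) = y := by
  have h : Function.RightInverse (⇑T.symm) (⇑T) := fun x => T.apply_symm_apply x
  exact h.iterate j y

variable (S : LRCantor X T L)

/-- index of the first tower -/
def z (q : ℕ) : Fin (S.C q) := ⟨0, S.C_pos q⟩

/-- the pieces of the partitions -/
def P (q : ℕ) (k : Fin (S.C q)) (j : ℕ) : Set X := (⇑T)^[j] ⁻¹' S.base q k

lemma P_zero (q : ℕ) (k : Fin (S.C q)) : P S q k 0 = S.base q k := by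
  simp [P]

lemma P_add (q : ℕ) (k : Fin (S.C q)) (a r : ℕ) :
    P S q k (a + r) = (⇑T)^[r] ⁻¹' P S q k a := by
  ext x
  simp [P, Function.iterate_add_apply]

lemma base_nonempty [Nonempty X] (q : ℕ) (k : Fin (S.C q)) : (S.base q k).Nonempty := by
  obtain ⟨x₀⟩ := ‹Nonempty X›
  obtain ⟨k₁, j₁, hj₁, hx⟩ := S.pieces_cover (q + 1) x₀
  obtain ⟨j, hj, hsub⟩ := S.KR5 q k₁ k
  refine ⟨(⇑T.symm)^[j] ((⇑T)^[j₁] x₀), hsub ?_⟩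
  show (⇑T)^[j] ((⇑T.symm)^[j] ((⇑T)^[j₁] x₀)) ∈ S.base (q + 1) k₁
  rw [iter_right_inv]
  exact hx

lemma P_nonempty [Nonempty X] (q : ℕ) (k : Fin (S.C q)) (j : ℕ) : (P S q k j).Nonempty := by
  obtain ⟨y, hy⟩ := base_nonempty S q k
  refine ⟨(⇑T.symm)^[j] y, ?_⟩
  show (⇑T)^[j] ((⇑T.symm)^[j] y) ∈ S.base q k
  rw [iter_right_inv]
  exact hy

lemma P_mble [MeasurableSpace X] [BorelSpace X] (q : ℕ) (k : Fin (S.C q)) (j : ℕ) :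
    MeasurableSet (P S q k j) :=
  ((S.clopen q k).isOpen.measurableSet).preimage (iter_cont T j).measurable

lemma base_sub_zero (q : ℕ) (k : Fin (S.C (q + 1))) : S.base (q + 1) k ⊆ S.base q (z S q) :=
  fun x hx => S.KR6 q (Set.mem_iUnion.2 ⟨k, hx⟩)

lemma base_zero_chain (m : ℕ) : ∀ q, m ≤ q → S.base q (z S q) ⊆ S.base m (z S m) := by
  intro q hq
  induction q, hq using Nat.le_induction with
  | base => exact subset_rfl
  | succ q hq ih => exact (base_sub_zero S q (z S (q + 1))).trans ih

lemma fact_top (q : ℕ) (k : Fin (S.C q)) (w : X)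
    (hw : (⇑T)^[S.hgt q k] w ∈ S.base q k) : ∃ k', w ∈ S.base q k' := by
  obtain ⟨k₁, j₁, hj₁, hmem⟩ := S.pieces_cover q w
  rcases Nat.eq_zero_or_pos j₁ with h0 | hpos
  · subst h0
    exact ⟨k₁, by simpa using hmem⟩
  · exfalso
    have hp := S.hgt_pos q k
    have h1 : T w ∈ (⇑T)^[j₁ - 1] ⁻¹' S.base q k₁ := by
      show (⇑T)^[j₁ - 1] (T w) ∈ S.base q k₁
      have hE : (⇑T)^[j₁] w = (⇑T)^[j₁ - 1] (T w) := by
        conv_lhs => rw [show j₁ = j₁ - 1 + 1 from by omega]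
        rw [Function.iterate_succ_apply]
      rwa [hE] at hmem
    have h2 : T w ∈ (⇑T)^[S.hgt q k - 1] ⁻¹' S.base q k := by
      show (⇑T)^[S.hgt q k - 1] (T w) ∈ S.base q k
      have hE : (⇑T)^[S.hgt q k] w = (⇑T)^[S.hgt q k - 1] (T w) := by
        conv_lhs => rw [show S.hgt q k = S.hgt q k - 1 + 1 from by omega]
        rw [Function.iterate_succ_apply]
      rwa [hE] at hw
    have hne : ((k₁ : Fin (S.C q)), j₁ - 1) ≠ (k, S.hgt q k - 1) := by
      intro hEq
      injection hEq with ha hb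
      subst ha
      omega
    exact Set.disjoint_left.mp
      (S.pieces_disjoint q k₁ k (j₁ - 1) (S.hgt q k - 1) (by omega) (by omega) hne) h1 h2

lemma no_overhang [Nonempty X] (q : ℕ) (l : Fin (S.C (q + 1))) (a : ℕ) (k : Fin (S.C q))
    (hsub : P S (q + 1) l a ⊆ S.base q k) (ha : a < S.hgt (q + 1) l) :
    a + S.hgt q k ≤ S.hgt (q + 1) l := by
  by_contra hcon
  push_neg at hcon
  have hH1 := S.hgt_pos (q + 1) l
  set H := S.hgt (q + 1) l with hH
  obtain ⟨x₀, hx₀⟩ := P_nonempty S (q + 1) l (H - 1)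
  have hc2 : (⇑T)^[H - 1 - a] x₀ ∈ P S (q + 1) l a := by
    show (⇑T)^[a] ((⇑T)^[H - 1 - a] x₀) ∈ S.base (q + 1) l
    rw [← Function.iterate_add_apply, show a + (H - 1 - a) = H - 1 from by omega]
    exact hx₀
  have hx₀k : x₀ ∈ P S q k (H - 1 - a) := hsub hc2
  have hy1 : T.symm x₀ ∈ P S q k (H - 1 - a + 1) := by
    show (⇑T)^[H - 1 - a + 1] (T.symm x₀) ∈ S.base q k
    rw [Function.iterate_succ_apply, T.apply_symm_apply]
    exact hx₀k
  have hy2 : (⇑T)^[H] (T.symm x₀) ∈ S.base (q + 1) l := by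
    rw [show H = H - 1 + 1 from by omega, Function.iterate_succ_apply, T.apply_symm_apply]
    exact hx₀
  obtain ⟨k'', hk''⟩ := fact_top S (q + 1) l (T.symm x₀) hy2
  have hy3 : T.symm x₀ ∈ P S q (z S q) 0 := by
    rw [P_zero]
    exact base_sub_zero S q k'' hk''
  have hne : ((k : Fin (S.C q)), H - 1 - a + 1) ≠ (z S q, 0) := by
    intro hEq
    injection hEq with _ hb
    exact Nat.succ_ne_zero _ hb
  exact Set.disjoint_left.mp
    (S.pieces_disjoint q k (z S q) (H - 1 - a + 1) 0 (by omega) (S.hgt_pos q _) hne) hy1 hy3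

lemma next_base [Nonempty X] (q : ℕ) (l : Fin (S.C (q + 1))) (a : ℕ) (k : Fin (S.C q))
    (hsub : P S (q + 1) l a ⊆ S.base q k) (hlt : a + S.hgt q k < S.hgt (q + 1) l) :
    ∃ k', P S (q + 1) l (a + S.hgt q k) ⊆ S.base q k' := by
  obtain ⟨k₀, j₀, hj₀, hsub₀⟩ := S.KR2 q l (a + S.hgt q k) hlt
  obtain ⟨x, hx⟩ := P_nonempty S (q + 1) l (a + S.hgt q k)
  have hgx : (⇑T)^[S.hgt q k] x ∈ S.base q k := by
    apply hsub
    show (⇑T)^[a] ((⇑T)^[S.hgt q k] x) ∈ S.base (q + 1) l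
    rw [← Function.iterate_add_apply]
    exact hx
  obtain ⟨k₁, hk₁⟩ := fact_top S q k x hgx
  have hx₀ : x ∈ (⇑T)^[j₀] ⁻¹' S.base q k₀ := hsub₀ hx
  rcases Nat.eq_zero_or_pos j₀ with h0 | hpos
  · subst h0
    exact ⟨k₀, by simpa [P] using hsub₀⟩
  · exfalso
    have hx1 : x ∈ (⇑T)^[0] ⁻¹' S.base q k₁ := by simpa using hk₁
    have hne : ((k₀ : Fin (S.C q)), j₀) ≠ (k₁, 0) := by
      intro hEq
      injection hEq with _ hb
      omega
    exact Set.disjoint_left.mp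
      (S.pieces_disjoint q k₀ k₁ j₀ 0 hj₀ (S.hgt_pos q k₁) hne) hx₀ hx1

lemma hgt_z_le [Nonempty X] (q : ℕ) (l : Fin (S.C (q + 1))) :
    S.hgt q (z S q) ≤ S.hgt (q + 1) l := by
  have h := no_overhang S q l 0 (z S q)
    (by rw [P_zero]; exact base_sub_zero S q l) (S.hgt_pos (q + 1) l)
  omega

lemma refine_piece (m : ℕ) : ∀ q, m ≤ q → ∀ (k : Fin (S.C q)) (j : ℕ), j < S.hgt q k →
    ∃ (k' : Fin (S.C m)) (j' : ℕ), j' < S.hgt m k' ∧ P S q k j ⊆ P S m k' j' := by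
  intro q hq
  induction q, hq using Nat.le_induction with
  | base => exact fun k j hj => ⟨k, j, hj, subset_rfl⟩
  | succ q hq ih =>
    intro k j hj
    obtain ⟨k₂, j₂, hj₂, hsub⟩ := S.KR2 q k j hj
    obtain ⟨k', j', hj', hsub'⟩ := ih k₂ j₂ hj₂
    exact ⟨k', j', hj', hsub.trans hsub'⟩

lemma piece_dichotomy (m q : ℕ) (hq : m ≤ q) (k : Fin (S.C q)) (j : ℕ) (hj : j < S.hgt q k) :
    P S q k j ⊆ S.base m (z S m) ∨ P S q k j ∩ S.base m (z S m) = ∅ := by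
  obtain ⟨k', j', hj', hsub⟩ := refine_piece S m q hq k j hj
  by_cases hz : k' = z S m ∧ j' = 0
  · left
    obtain ⟨h1, h2⟩ := hz
    subst h1; subst h2
    rwa [P_zero] at hsub
  · right
    rw [Set.eq_empty_iff_forall_notMem]
    rintro x ⟨hx1, hx2⟩
    have hx2' : x ∈ P S m (z S m) 0 := by rwa [P_zero]
    have hne : ((k' : Fin (S.C m)), j') ≠ (z S m, 0) := by
      intro hEq
      injection hEq with ha hb
      exact hz ⟨ha, hb⟩
    exact Set.disjoint_left.mp
      (S.pieces_disjoint m k' (z S m) j' 0 hj' (S.hgt_pos m _) hne) (hsub hx1) hx2'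

open Classical in
/-- heights of the pieces of the tower `(q,k)` that are contained in `B₁(m)`. -/
noncomputable def Jset (m q : ℕ) (k : Fin (S.C q)) : Finset ℕ :=
  (Finset.range (S.hgt q k)).filter (fun j => P S q k j ⊆ S.base m (z S m))

lemma mem_Jset {m q : ℕ} {k : Fin (S.C q)} {j : ℕ} :
    j ∈ Jset S m q k ↔ j < S.hgt q k ∧ P S q k j ⊆ S.base m (z S m) := by
  simp [Jset]

lemma block_equiv [Nonempty X] (m q : ℕ) (hq : m ≤ q) (l : Fin (S.C (q + 1))) (a : ℕ)
    (k : Fin (S.C q)) (hsub : P S (q + 1) l a ⊆ S.base q k) (r : ℕ) (hr : r < S.hgt q k) :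
    (P S (q + 1) l (a + r) ⊆ S.base m (z S m)) ↔ (P S q k r ⊆ S.base m (z S m)) := by
  have hincl : P S (q + 1) l (a + r) ⊆ P S q k r := by
    rw [P_add]
    exact Set.preimage_mono hsub
  constructor
  · intro hBa
    rcases piece_dichotomy S m q hq k r hr with h | h
    · exact h
    · exfalso
      obtain ⟨x, hx⟩ := P_nonempty S (q + 1) l (a + r)
      exact Set.eq_empty_iff_forall_notMem.mp h x ⟨hincl hx, hBa hx⟩
  · intro h
    exact hincl.trans h

lemma block_count [Nonempty X] (m q : ℕ) (hq : m ≤ q) (l : Fin (S.C (q + 1))) (a : ℕ)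
    (k : Fin (S.C q)) (hsub : P S (q + 1) l a ⊆ S.base q k) :
    ((Finset.Ico a (a + S.hgt q k)).filter
        (fun i => P S (q + 1) l i ⊆ S.base m (z S m))).card = (Jset S m q k).card := by
  classical
  have h1 : Finset.Ico a (a + S.hgt q k) = (Finset.range (S.hgt q k)).image (a + ·) := by
    rw [Finset.range_eq_Ico, Finset.image_add_left_Ico, Nat.add_zero]
  rw [h1, Finset.filter_image, Finset.card_image_of_injective _ (add_right_injective a)]
  have h2 : (Finset.range (S.hgt q k)).filter (fun r => P S (q + 1) l (a + r) ⊆ S.base m (z S m))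
      = (Finset.range (S.hgt q k)).filter (fun r => P S q k r ⊆ S.base m (z S m)) := by
    apply Finset.filter_congr
    intro r hr
    exact block_equiv S m q hq l a k hsub r (Finset.mem_range.mp hr)
  rw [h2]
  rfl

/-- density of `B₁(m)` in the tower `(q,k)` -/
noncomputable def dA (m q : ℕ) (k : Fin (S.C q)) : ℝ :=
  ((Jset S m q k).card : ℝ) / (S.hgt q k : ℝ)

lemma finNE (q : ℕ) : Nonempty (Fin (S.C q)) := ⟨z S q⟩

noncomputable def eMin (m q : ℕ) : ℝ :=
  haveI := finNE S q
  Finset.inf' Finset.univ Finset.univ_nonempty (dA S m q)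

lemma eMin_le (m q : ℕ) (k : Fin (S.C q)) : eMin S m q ≤ dA S m q k := by
  haveI := finNE S q
  exact Finset.inf'_le _ (Finset.mem_univ k)

lemma le_eMin (m q : ℕ) {c : ℝ} (h : ∀ k, c ≤ dA S m q k) : c ≤ eMin S m q := by
  haveI := finNE S q
  exact Finset.le_inf' _ _ (fun k _ => h k)

lemma dA_nonneg (m q : ℕ) (k : Fin (S.C q)) : 0 ≤ dA S m q k := by
  unfold dA
  positivity

lemma eMin_nonneg (m q : ℕ) : 0 ≤ eMin S m q :=
  le_eMin S m q (fun k => dA_nonneg S m q k)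

lemma card_eq_dA (m q : ℕ) (k : Fin (S.C q)) :
    ((Jset S m q k).card : ℝ) = dA S m q k * (S.hgt q k : ℝ) := by
  have h : (S.hgt q k : ℝ) ≠ 0 := by
    have := S.hgt_pos q k
    positivity
  rw [dA, div_mul_cancel₀ _ h]

lemma tile_lower [Nonempty X] (m q : ℕ) (hq : m ≤ q) (l : Fin (S.C (q + 1))) :
    ∀ (b a : ℕ) (k : Fin (S.C q)), P S (q + 1) l a ⊆ S.base q k → a < S.hgt (q + 1) l →
      S.hgt (q + 1) l - a ≤ b →
      eMin S m q * ((S.hgt (q + 1) l : ℝ) - (a : ℝ)) ≤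
        (((Finset.Ico a (S.hgt (q + 1) l)).filter
            (fun i => P S (q + 1) l i ⊆ S.base m (z S m))).card : ℝ) := by
  classical
  intro b
  induction b with
  | zero => intro a k _ ha hb; exact absurd hb (by omega)
  | succ b ih =>
    intro a k hsub ha hb
    have hg1 : 0 < S.hgt q k := S.hgt_pos q k
    have hfit : a + S.hgt q k ≤ S.hgt (q + 1) l := no_overhang S q l a k hsub ha
    have hblock := block_count S m q hq l a k hsub
    have hJ : eMin S m q * (S.hgt q k : ℝ) ≤ ((Jset S m q k).card : ℝ) := by
      have h1 := eMin_le S m q k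
      have h2 : (0 : ℝ) < (S.hgt q k : ℝ) := by exact_mod_cast hg1
      calc eMin S m q * (S.hgt q k : ℝ) ≤ dA S m q k * (S.hgt q k : ℝ) :=
            mul_le_mul_of_nonneg_right h1 h2.le
        _ = ((Jset S m q k).card : ℝ) := (card_eq_dA S m q k).symm
    rcases eq_or_lt_of_le hfit with heq | hlt
    · rw [← heq, hblock]
      push_cast
      linarith
    · obtain ⟨k', hk'⟩ := next_base S q l a k hsub hlt
      have ihr := ih (a + S.hgt q k) k' hk' hlt (by omega)
      have hsplit : Finset.Ico a (S.hgt (q + 1) l) =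
          Finset.Ico a (a + S.hgt q k) ∪ Finset.Ico (a + S.hgt q k) (S.hgt (q + 1) l) :=
        (Finset.Ico_union_Ico_eq_Ico (by omega) hlt.le).symm
      have hdisj : Disjoint (Finset.Ico a (a + S.hgt q k))
          (Finset.Ico (a + S.hgt q k) (S.hgt (q + 1) l)) :=
        Finset.Ico_disjoint_Ico_consecutive a _ _
      rw [hsplit, Finset.filter_union,
        Finset.card_union_of_disjoint
          (hdisj.mono (Finset.filter_subset _ _) (Finset.filter_subset _ _))]
      push_cast
      rw [hblock]
      push_cast at ihr
      have hcast : ((a : ℝ) + (S.hgt q k : ℝ)) = ((a + S.hgt q k : ℕ) : ℝ) := by push_cast; ring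
      linarith

lemma tile_bonus [Nonempty X] (m q : ℕ) (hq : m ≤ q) (l : Fin (S.C (q + 1)))
    (kM : Fin (S.C q)) :
    ∀ (b a : ℕ) (k : Fin (S.C q)), P S (q + 1) l a ⊆ S.base q k → a < S.hgt (q + 1) l →
      S.hgt (q + 1) l - a ≤ b →
      (∃ j₀, a ≤ j₀ ∧ j₀ < S.hgt (q + 1) l ∧ P S (q + 1) l j₀ ⊆ S.base q kM) →
      eMin S m q * ((S.hgt (q + 1) l : ℝ) - (a : ℝ)) +
          (dA S m q kM - eMin S m q) * (S.hgt q kM : ℝ) ≤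
        (((Finset.Ico a (S.hgt (q + 1) l)).filter
            (fun i => P S (q + 1) l i ⊆ S.base m (z S m))).card : ℝ) := by
  classical
  intro b
  induction b with
  | zero => intro a k _ ha hb _; exact absurd hb (by omega)
  | succ b ih =>
    intro a k hsub ha hb hj₀
    obtain ⟨j₀, hj₀a, hj₀H, hj₀sub⟩ := hj₀
    have hg1 : 0 < S.hgt q k := S.hgt_pos q k
    have hfit : a + S.hgt q k ≤ S.hgt (q + 1) l := no_overhang S q l a k hsub ha
    have hblock := block_count S m q hq l a k hsub
    by_cases hcase : j₀ < a + S.hgt q k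
    · -- the copy of `kM` starts exactly at `a` and `k = kM`
      have hPj₀ : P S (q + 1) l j₀ ⊆ P S q k (j₀ - a) := by
        have h := P_add S (q + 1) l a (j₀ - a)
        rw [show a + (j₀ - a) = j₀ from by omega] at h
        rw [h]
        exact Set.preimage_mono hsub
      obtain ⟨x, hx⟩ := P_nonempty S (q + 1) l j₀
      have hx1 : x ∈ P S q k (j₀ - a) := hPj₀ hx
      have hx2 : x ∈ P S q kM 0 := by
        rw [P_zero]
        exact hj₀sub hx
      have hkk : k = kM ∧ j₀ = a := by
        by_contra hcon
        have hne : ((k : Fin (S.C q)), j₀ - a) ≠ (kM, 0) := by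
          intro hEq
          injection hEq with hEk hEj
          exact hcon ⟨hEk, by omega⟩
        exact Set.disjoint_left.mp
          (S.pieces_disjoint q k kM (j₀ - a) 0 (by omega) (S.hgt_pos q kM) hne) hx1 hx2
      obtain ⟨hk, _⟩ := hkk
      subst hk
      have hcardJ : ((Jset S m q k).card : ℝ) = dA S m q k * (S.hgt q k : ℝ) :=
        card_eq_dA S m q k
      rcases eq_or_lt_of_le hfit with heq | hlt
      · rw [← heq, hblock]
        push_cast
        linarith [hcardJ]
      · obtain ⟨k', hk'⟩ := next_base S q l a k hsub hlt
        have ihr := tile_lower S m q hq l b (a + S.hgt q k) k' hk' hlt (by omega)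
        have hsplit : Finset.Ico a (S.hgt (q + 1) l) =
            Finset.Ico a (a + S.hgt q k) ∪ Finset.Ico (a + S.hgt q k) (S.hgt (q + 1) l) :=
          (Finset.Ico_union_Ico_eq_Ico (by omega) hlt.le).symm
        have hdisj : Disjoint (Finset.Ico a (a + S.hgt q k))
            (Finset.Ico (a + S.hgt q k) (S.hgt (q + 1) l)) :=
          Finset.Ico_disjoint_Ico_consecutive a _ _
        rw [hsplit, Finset.filter_union,
          Finset.card_union_of_disjoint
            (hdisj.mono (Finset.filter_subset _ _) (Finset.filter_subset _ _))]
        push_cast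
        rw [hblock]
        push_cast at ihr
        linarith [hcardJ]
    · -- the copy of `kM` is further down
      push_neg at hcase
      have hlt : a + S.hgt q k < S.hgt (q + 1) l := by omega
      obtain ⟨k', hk'⟩ := next_base S q l a k hsub hlt
      have ihr := ih (a + S.hgt q k) k' hk' hlt (by omega) ⟨j₀, hcase, hj₀H, hj₀sub⟩
      have hJ : eMin S m q * (S.hgt q k : ℝ) ≤ ((Jset S m q k).card : ℝ) := by
        have h1 := eMin_le S m q k
        have h2 : (0 : ℝ) < (S.hgt q k : ℝ) := by exact_mod_cast hg1
        calc eMin S m q * (S.hgt q k : ℝ) ≤ dA S m q k * (S.hgt q k : ℝ) :=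
              mul_le_mul_of_nonneg_right h1 h2.le
          _ = ((Jset S m q k).card : ℝ) := (card_eq_dA S m q k).symm
      have hsplit : Finset.Ico a (S.hgt (q + 1) l) =
          Finset.Ico a (a + S.hgt q k) ∪ Finset.Ico (a + S.hgt q k) (S.hgt (q + 1) l) :=
        (Finset.Ico_union_Ico_eq_Ico (by omega) hlt.le).symm
      have hdisj : Disjoint (Finset.Ico a (a + S.hgt q k))
          (Finset.Ico (a + S.hgt q k) (S.hgt (q + 1) l)) :=
        Finset.Ico_disjoint_Ico_consecutive a _ _
      rw [hsplit, Finset.filter_union,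
        Finset.card_union_of_disjoint
          (hdisj.mono (Finset.filter_subset _ _) (Finset.filter_subset _ _))]
      push_cast
      rw [hblock]
      push_cast at ihr
      linarith


section Measure

variable [MeasurableSpace X] [BorelSpace X] {μ : MeasureTheory.Measure X}

lemma meas_P (hinv : MeasurePreserving (⇑T) μ μ) (q : ℕ) (k : Fin (S.C q)) (j : ℕ) :
    μ (P S q k j) = μ (S.base q k) :=
  (hinv.iterate j).measure_preimage
    ((S.clopen q k).isOpen.measurableSet.nullMeasurableSet)

lemma kac [IsProbabilityMeasure μ] (hinv : MeasurePreserving (⇑T) μ μ) (q : ℕ) :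
    ∑ k : Fin (S.C q), (S.hgt q k : ℝ≥0∞) * μ (S.base q k) = 1 := by
  classical
  set fs : Finset ((_ : Fin (S.C q)) × ℕ) :=
    Finset.univ.sigma (fun k => Finset.range (S.hgt q k)) with hfs
  have hdisj : (↑fs : Set ((_ : Fin (S.C q)) × ℕ)).PairwiseDisjoint
      (fun p => P S q p.1 p.2) := by
    rintro ⟨k, j⟩ hp ⟨k', j'⟩ hp' hne
    have hj : j < S.hgt q k := by
      have := (Finset.mem_sigma.mp (Finset.mem_coe.mp hp)).2
      simpa using this
    have hj' : j' < S.hgt q k' := by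
      have := (Finset.mem_sigma.mp (Finset.mem_coe.mp hp')).2
      simpa using this
    exact S.pieces_disjoint q k k' j j' hj hj' (by
      intro h
      injection h with h1 h2
      subst h1; subst h2
      exact hne rfl)
  have hsum := MeasureTheory.measure_biUnion_finset (μ := μ) hdisj (fun b _ => P_mble S q b.1 b.2)
  have hre : ∑ p ∈ fs, μ (P S q p.1 p.2)
      = ∑ k : Fin (S.C q), (S.hgt q k : ℝ≥0∞) * μ (S.base q k) := by
    rw [hfs, Finset.sum_sigma]
    apply Finset.sum_congr rfl
    intro k _
    calc ∑ j ∈ Finset.range (S.hgt q k), μ (P S q k j)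
        = ∑ _j ∈ Finset.range (S.hgt q k), μ (S.base q k) :=
          Finset.sum_congr rfl (fun j _ => meas_P S hinv q k j)
      _ = (S.hgt q k : ℝ≥0∞) * μ (S.base q k) := by
          rw [Finset.sum_const, Finset.card_range, nsmul_eq_mul]
  rw [hre] at hsum
  have hcover : (⋃ p ∈ fs, P S q p.1 p.2) = Set.univ := by
    apply Set.eq_univ_of_forall
    intro x
    obtain ⟨k, j, hj, hx⟩ := S.pieces_cover q x
    exact Set.mem_biUnion (show (⟨k, j⟩ : (_ : Fin (S.C q)) × ℕ) ∈ fs by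
      simp [hfs, hj]) hx
  rw [hcover, MeasureTheory.measure_univ] at hsum
  exact hsum.symm

lemma muB_sum [Nonempty X] [IsProbabilityMeasure μ] (hinv : MeasurePreserving (⇑T) μ μ)
    (m q : ℕ) (hq : m ≤ q) :
    μ (S.base m (z S m))
      = ∑ k : Fin (S.C q), ((Jset S m q k).card : ℝ≥0∞) * μ (S.base q k) := by
  classical
  set fs : Finset ((_ : Fin (S.C q)) × ℕ) :=
    Finset.univ.sigma (fun k => Jset S m q k) with hfs
  have hdisj : (↑fs : Set ((_ : Fin (S.C q)) × ℕ)).PairwiseDisjoint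
      (fun p => P S q p.1 p.2) := by
    rintro ⟨k, j⟩ hp ⟨k', j'⟩ hp' hne
    have hj : j < S.hgt q k :=
      ((mem_Jset S).mp (Finset.mem_sigma.mp (Finset.mem_coe.mp hp)).2).1
    have hj' : j' < S.hgt q k' :=
      ((mem_Jset S).mp (Finset.mem_sigma.mp (Finset.mem_coe.mp hp')).2).1
    exact S.pieces_disjoint q k k' j j' hj hj' (by
      intro h
      injection h with h1 h2
      subst h1; subst h2
      exact hne rfl)
  have hsum := MeasureTheory.measure_biUnion_finset (μ := μ) hdisj (fun b _ => P_mble S q b.1 b.2)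
  have hre : ∑ p ∈ fs, μ (P S q p.1 p.2)
      = ∑ k : Fin (S.C q), ((Jset S m q k).card : ℝ≥0∞) * μ (S.base q k) := by
    rw [hfs, Finset.sum_sigma]
    apply Finset.sum_congr rfl
    intro k _
    calc ∑ j ∈ Jset S m q k, μ (P S q k j)
        = ∑ _j ∈ Jset S m q k, μ (S.base q k) :=
          Finset.sum_congr rfl (fun j _ => meas_P S hinv q k j)
      _ = ((Jset S m q k).card : ℝ≥0∞) * μ (S.base q k) := by
          rw [Finset.sum_const, nsmul_eq_mul]
  rw [hre] at hsum
  have hcover : (⋃ p ∈ fs, P S q p.1 p.2) = S.base m (z S m) := by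
    apply Set.Subset.antisymm
    · intro x hx
      simp only [Set.mem_iUnion] at hx
      obtain ⟨p, hp, hxp⟩ := hx
      exact ((mem_Jset S).mp (Finset.mem_sigma.mp hp).2).2 hxp
    · intro x hx
      obtain ⟨k, j, hj, hxm⟩ := S.pieces_cover q x
      have hxP : x ∈ P S q k j := hxm
      rcases piece_dichotomy S m q hq k j hj with h | h
      · exact Set.mem_biUnion (show (⟨k, j⟩ : (_ : Fin (S.C q)) × ℕ) ∈ fs by
          simp [hfs, mem_Jset, hj, h]) hxP
      · exfalso
        have : x ∈ P S q k j ∩ S.base m (z S m) := ⟨hxP, hx⟩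
        rw [h] at this
        exact this
  rw [hcover] at hsum
  exact hsum

lemma bases_le (q : ℕ) :
    ∑ l : Fin (S.C (q + 1)), μ (S.base (q + 1) l) ≤ μ (S.base q (z S q)) := by
  classical
  have hdisj : (↑(Finset.univ : Finset (Fin (S.C (q + 1)))) :
      Set (Fin (S.C (q + 1)))).PairwiseDisjoint (fun l => S.base (q + 1) l) := by
    intro l _ l' _ hne
    have h := S.pieces_disjoint (q + 1) l l' 0 0 (S.hgt_pos _ _) (S.hgt_pos _ _)
      (by intro h; injection h with h1 _; exact hne h1)
    simpa using h
  have hsum := MeasureTheory.measure_biUnion_finset (μ := μ) hdisj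
    (fun l _ => (S.clopen (q + 1) l).isOpen.measurableSet)
  rw [← hsum]
  apply MeasureTheory.measure_mono
  intro x hx
  simp only [Set.mem_iUnion] at hx
  obtain ⟨l, _, hl⟩ := hx
  exact base_sub_zero S q l hl

lemma beta0_lb [IsProbabilityMeasure μ] (hinv : MeasurePreserving (⇑T) μ μ) (q : ℕ) :
    (1 : ℝ≥0∞) ≤ (L : ℝ≥0∞) * (S.hgt q (z S q) : ℝ≥0∞) * μ (S.base q (z S q)) := by
  have hkac := kac S hinv (q + 1)
  have h1 : (1 : ℝ≥0∞) ≤ ∑ l : Fin (S.C (q + 1)),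
      ((L : ℝ≥0∞) * (S.hgt q (z S q) : ℝ≥0∞)) * μ (S.base (q + 1) l) := by
    rw [← hkac]
    apply Finset.sum_le_sum
    intro l _
    apply mul_le_mul_left
    have h := S.LR q l (z S q)
    calc (S.hgt (q + 1) l : ℝ≥0∞) ≤ ((L * S.hgt q (z S q) : ℕ) : ℝ≥0∞) := by
          exact_mod_cast Nat.cast_le.mpr h
      _ = (L : ℝ≥0∞) * (S.hgt q (z S q) : ℝ≥0∞) := by push_cast; ring
  calc (1 : ℝ≥0∞) ≤ ∑ l : Fin (S.C (q + 1)),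
        ((L : ℝ≥0∞) * (S.hgt q (z S q) : ℝ≥0∞)) * μ (S.base (q + 1) l) := h1
    _ = ((L : ℝ≥0∞) * (S.hgt q (z S q) : ℝ≥0∞)) *
        ∑ l : Fin (S.C (q + 1)), μ (S.base (q + 1) l) := by rw [Finset.mul_sum]
    _ ≤ ((L : ℝ≥0∞) * (S.hgt q (z S q) : ℝ≥0∞)) * μ (S.base q (z S q)) :=
        mul_le_mul_right (bases_le S q) _

lemma beta0_lb_real [IsProbabilityMeasure μ] (hinv : MeasurePreserving (⇑T) μ μ)
    (q : ℕ) (hL : 1 ≤ L) :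
    1 / ((L : ℝ) * (S.hgt q (z S q) : ℝ)) ≤ (μ (S.base q (z S q))).toReal := by
  have h := beta0_lb S hinv (μ := μ) q
  have hfin : (L : ℝ≥0∞) * (S.hgt q (z S q) : ℝ≥0∞) * μ (S.base q (z S q)) ≠ ∞ :=
    ENNReal.mul_ne_top (ENNReal.mul_ne_top (ENNReal.natCast_ne_top _)
      (ENNReal.natCast_ne_top _)) (MeasureTheory.measure_ne_top μ _)
  have h2 := ENNReal.toReal_mono hfin h
  rw [ENNReal.toReal_mul, ENNReal.toReal_mul, ENNReal.toReal_one,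
    ENNReal.toReal_natCast, ENNReal.toReal_natCast] at h2
  have hL0 : (0 : ℝ) < (L : ℝ) := by exact_mod_cast Nat.lt_of_lt_of_le Nat.zero_lt_one hL
  have hh0 : (0 : ℝ) < (S.hgt q (z S q) : ℝ) := by exact_mod_cast S.hgt_pos q (z S q)
  rw [div_le_iff₀ (mul_pos hL0 hh0)]
  linarith

lemma kac_real [IsProbabilityMeasure μ] (hinv : MeasurePreserving (⇑T) μ μ) (q : ℕ) :
    ∑ k : Fin (S.C q), (S.hgt q k : ℝ) * (μ (S.base q k)).toReal = 1 := by
  have h := kac S hinv (μ := μ) q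
  have h1 : ((∑ k : Fin (S.C q), (S.hgt q k : ℝ≥0∞) * μ (S.base q k)).toReal) = 1 := by
    rw [h]; exact ENNReal.toReal_one
  rw [ENNReal.toReal_sum (fun k _ => ENNReal.mul_ne_top (ENNReal.natCast_ne_top _)
    (MeasureTheory.measure_ne_top μ _))] at h1
  simpa [ENNReal.toReal_mul] using h1

lemma muB_sum_real [Nonempty X] [IsProbabilityMeasure μ] (hinv : MeasurePreserving (⇑T) μ μ)
    (m q : ℕ) (hq : m ≤ q) :
    (μ (S.base m (z S m))).toReal
      = ∑ k : Fin (S.C q), ((Jset S m q k).card : ℝ) * (μ (S.base q k)).toReal := by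
  rw [muB_sum S hinv m q hq, ENNReal.toReal_sum (fun k _ =>
    ENNReal.mul_ne_top (ENNReal.natCast_ne_top _) (MeasureTheory.measure_ne_top μ _))]
  simp [ENNReal.toReal_mul]

lemma muB_le_dmax [Nonempty X] [IsProbabilityMeasure μ] (hinv : MeasurePreserving (⇑T) μ μ)
    (m q : ℕ) (hq : m ≤ q) (kM : Fin (S.C q)) (hkM : ∀ k, dA S m q k ≤ dA S m q kM) :
    (μ (S.base m (z S m))).toReal ≤ dA S m q kM := by
  rw [muB_sum_real S hinv m q hq]
  calc ∑ k : Fin (S.C q), ((Jset S m q k).card : ℝ) * (μ (S.base q k)).toReal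
      ≤ ∑ k : Fin (S.C q), (dA S m q kM * (S.hgt q k : ℝ)) * (μ (S.base q k)).toReal := by
        apply Finset.sum_le_sum
        intro k _
        apply mul_le_mul_of_nonneg_right _ ENNReal.toReal_nonneg
        rw [card_eq_dA S m q k]
        apply mul_le_mul_of_nonneg_right (hkM k)
        positivity
    _ = dA S m q kM * ∑ k : Fin (S.C q), (S.hgt q k : ℝ) * (μ (S.base q k)).toReal := by
        rw [Finset.mul_sum]
        apply Finset.sum_congr rfl
        intro k _
        ring
    _ = dA S m q kM := by rw [kac_real S hinv q, mul_one]

lemma contraction [Nonempty X] [IsProbabilityMeasure μ] (hinv : MeasurePreserving (⇑T) μ μ)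
    (m q : ℕ) (hq : m ≤ q) (hL : 1 ≤ L) :
    eMin S m q + ((μ (S.base m (z S m))).toReal - eMin S m q) / (L : ℝ)
      ≤ eMin S m (q + 1) := by
  classical
  haveI := finNE S q
  obtain ⟨kM, hkM⟩ := Finite.exists_max (dA S m q)
  have hDm : (μ (S.base m (z S m))).toReal ≤ dA S m q kM :=
    muB_le_dmax S hinv m q hq kM hkM
  apply le_eMin
  intro l
  obtain ⟨j₀, hj₀H, hj₀sub⟩ := S.KR5 q l kM
  have hstart : P S (q + 1) l 0 ⊆ S.base q (z S q) := by
    rw [P_zero]; exact base_sub_zero S q l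
  have hbon := tile_bonus S m q hq l kM (S.hgt (q + 1) l) 0 (z S q) hstart
    (S.hgt_pos (q + 1) l) (by omega) ⟨j₀, Nat.zero_le _, hj₀H, hj₀sub⟩
  have hcard : ((Finset.Ico 0 (S.hgt (q + 1) l)).filter
      (fun i => P S (q + 1) l i ⊆ S.base m (z S m))).card = (Jset S m (q + 1) l).card := by
    rw [← Finset.range_eq_Ico]
    rfl
  rw [hcard] at hbon
  have hH0 : (0 : ℝ) < (S.hgt (q + 1) l : ℝ) := by exact_mod_cast S.hgt_pos (q + 1) l
  have hg0 : (0 : ℝ) < (S.hgt q kM : ℝ) := by exact_mod_cast S.hgt_pos q kM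
  have hL0 : (0 : ℝ) < (L : ℝ) := by exact_mod_cast Nat.lt_of_lt_of_le Nat.zero_lt_one hL
  have hLH : (S.hgt (q + 1) l : ℝ) ≤ (L : ℝ) * (S.hgt q kM : ℝ) := by
    have := S.LR q l kM
    exact_mod_cast this
  have hde : eMin S m q ≤ dA S m q kM := eMin_le S m q kM
  have hdl : dA S m (q + 1) l = ((Jset S m (q + 1) l).card : ℝ) / (S.hgt (q + 1) l : ℝ) := rfl
  rw [hdl, le_div_iff₀ hH0]
  have hkey : ((μ (S.base m (z S m))).toReal - eMin S m q) / (L : ℝ) * (S.hgt (q + 1) l : ℝ)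
      ≤ (dA S m q kM - eMin S m q) * (S.hgt q kM : ℝ) := by
    rw [div_mul_eq_mul_div, div_le_iff₀ hL0]
    have h1 : ((μ (S.base m (z S m))).toReal - eMin S m q) * (S.hgt (q + 1) l : ℝ)
        ≤ (dA S m q kM - eMin S m q) * (S.hgt (q + 1) l : ℝ) := by
      apply mul_le_mul_of_nonneg_right _ hH0.le
      linarith
    have h2 : (dA S m q kM - eMin S m q) * (S.hgt (q + 1) l : ℝ)
        ≤ (dA S m q kM - eMin S m q) * ((L : ℝ) * (S.hgt q kM : ℝ)) := by
      apply mul_le_mul_of_nonneg_left hLH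
      linarith
    calc ((μ (S.base m (z S m))).toReal - eMin S m q) * (S.hgt (q + 1) l : ℝ)
        ≤ (dA S m q kM - eMin S m q) * ((L : ℝ) * (S.hgt q kM : ℝ)) := h1.trans h2
      _ = (dA S m q kM - eMin S m q) * (S.hgt q kM : ℝ) * (L : ℝ) := by ring
  push_cast at hbon
  ring_nf at hbon hkey ⊢
  nlinarith [hbon, hkey]


lemma good_subset [Nonempty X] (m s : ℕ) :
    (⋃ j ∈ Jset S m (m + s) (z S (m + s)), P S (m + s + 1) (z S (m + s + 1)) j) ⊆
      S.base m (z S m) ∩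
        (⇑T)^[S.hgt (m + s + 1) (z S (m + s + 1))] '' S.base m (z S m) := by
  intro y hy
  simp only [Set.mem_iUnion] at hy
  obtain ⟨j, hjJ, hyP⟩ := hy
  obtain ⟨hjlt, hjB⟩ := (mem_Jset S).mp hjJ
  constructor
  · apply hjB
    show (⇑T)^[j] y ∈ S.base (m + s) (z S (m + s))
    exact base_sub_zero S (m + s) (z S (m + s + 1)) hyP
  · set h := S.hgt (m + s + 1) (z S (m + s + 1)) with hh
    set x := (⇑T.symm)^[h] y with hxdef
    have hTx : (⇑T)^[h] x = y := iter_right_inv T h y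
    refine ⟨x, ?_, hTx⟩
    have hw : (⇑T)^[h] ((⇑T)^[j] x) ∈ S.base (m + s + 1) (z S (m + s + 1)) := by
      have hcomm : (⇑T)^[h] ((⇑T)^[j] x) = (⇑T)^[j] ((⇑T)^[h] x) := by
        rw [← Function.iterate_add_apply, ← Function.iterate_add_apply, Nat.add_comm]
      rw [hcomm, hTx]
      exact hyP
    obtain ⟨k', hk'⟩ := fact_top S (m + s + 1) (z S (m + s + 1)) ((⇑T)^[j] x) hw
    apply hjB
    show (⇑T)^[j] x ∈ S.base (m + s) (z S (m + s))
    exact base_sub_zero S (m + s) k' hk'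

lemma corr_lb [Nonempty X] [IsProbabilityMeasure μ] (hinv : MeasurePreserving (⇑T) μ μ)
    (m s : ℕ) (hL : 1 ≤ L) :
    eMin S m (m + s) / (L : ℝ) ^ 2 ≤
      (μ (S.base m (z S m) ∩
        (⇑T)^[S.hgt (m + s + 1) (z S (m + s + 1))] '' S.base m (z S m))).toReal := by
  classical
  have hdisj : (↑(Jset S m (m + s) (z S (m + s))) : Set ℕ).PairwiseDisjoint
      (fun j => P S (m + s + 1) (z S (m + s + 1)) j) := by
    intro j hj j' hj' hne
    have h1 : j < S.hgt (m + s + 1) (z S (m + s + 1)) :=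
      lt_of_lt_of_le ((mem_Jset S).mp (Finset.mem_coe.mp hj)).1 (hgt_z_le S (m + s) _)
    have h2 : j' < S.hgt (m + s + 1) (z S (m + s + 1)) :=
      lt_of_lt_of_le ((mem_Jset S).mp (Finset.mem_coe.mp hj')).1 (hgt_z_le S (m + s) _)
    exact S.pieces_disjoint (m + s + 1) _ _ j j' h1 h2 (by
      intro h; injection h with _ hb; exact hne hb)
  have hsum := MeasureTheory.measure_biUnion_finset (μ := μ) hdisj
    (fun j _ => P_mble S (m + s + 1) (z S (m + s + 1)) j)
  have hre : ∑ j ∈ Jset S m (m + s) (z S (m + s)), μ (P S (m + s + 1) (z S (m + s + 1)) j)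
      = ((Jset S m (m + s) (z S (m + s))).card : ℝ≥0∞) *
          μ (S.base (m + s + 1) (z S (m + s + 1))) := by
    calc ∑ j ∈ Jset S m (m + s) (z S (m + s)), μ (P S (m + s + 1) (z S (m + s + 1)) j)
        = ∑ _j ∈ Jset S m (m + s) (z S (m + s)), μ (S.base (m + s + 1) (z S (m + s + 1))) :=
          Finset.sum_congr rfl (fun j _ => meas_P S hinv (m + s + 1) (z S (m + s + 1)) j)
      _ = _ := by rw [Finset.sum_const, nsmul_eq_mul]
  rw [hre] at hsum
  have hchain : ((Jset S m (m + s) (z S (m + s))).card : ℝ≥0∞) *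
      μ (S.base (m + s + 1) (z S (m + s + 1)))
      ≤ μ (S.base m (z S m) ∩
        (⇑T)^[S.hgt (m + s + 1) (z S (m + s + 1))] '' S.base m (z S m)) := by
    rw [← hsum]
    exact MeasureTheory.measure_mono (good_subset S m s)
  have hR := ENNReal.toReal_mono (MeasureTheory.measure_ne_top μ _) hchain
  rw [ENNReal.toReal_mul, ENNReal.toReal_natCast] at hR
  have hβ := beta0_lb_real S hinv (μ := μ) (m + s + 1) hL
  have hLH : (S.hgt (m + s + 1) (z S (m + s + 1)) : ℝ)
      ≤ (L : ℝ) * (S.hgt (m + s) (z S (m + s)) : ℝ) := by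
    exact_mod_cast S.LR (m + s) (z S (m + s + 1)) (z S (m + s))
  have hq0 : (0 : ℝ) < (S.hgt (m + s) (z S (m + s)) : ℝ) := by
    exact_mod_cast S.hgt_pos _ _
  have hn0 : (0 : ℝ) < (S.hgt (m + s + 1) (z S (m + s + 1)) : ℝ) := by
    exact_mod_cast S.hgt_pos _ _
  have hL0 : (0 : ℝ) < (L : ℝ) := by
    exact_mod_cast Nat.lt_of_lt_of_le Nat.zero_lt_one hL
  have he0 : 0 ≤ eMin S m (m + s) := eMin_nonneg S m (m + s)
  have hcardE : eMin S m (m + s) * (S.hgt (m + s) (z S (m + s)) : ℝ)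
      ≤ ((Jset S m (m + s) (z S (m + s))).card : ℝ) := by
    calc eMin S m (m + s) * (S.hgt (m + s) (z S (m + s)) : ℝ)
        ≤ dA S m (m + s) (z S (m + s)) * (S.hgt (m + s) (z S (m + s)) : ℝ) :=
          mul_le_mul_of_nonneg_right (eMin_le S m (m + s) _) hq0.le
      _ = _ := (card_eq_dA S m (m + s) _).symm
  have hstep1 : eMin S m (m + s) / (L : ℝ) ^ 2
      = (eMin S m (m + s) * (S.hgt (m + s) (z S (m + s)) : ℝ)) /
        ((L : ℝ) * ((L : ℝ) * (S.hgt (m + s) (z S (m + s)) : ℝ))) := by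
    field_simp
  have h5 : (eMin S m (m + s) * (S.hgt (m + s) (z S (m + s)) : ℝ)) /
        ((L : ℝ) * ((L : ℝ) * (S.hgt (m + s) (z S (m + s)) : ℝ)))
      ≤ (eMin S m (m + s) * (S.hgt (m + s) (z S (m + s)) : ℝ)) /
        ((L : ℝ) * (S.hgt (m + s + 1) (z S (m + s + 1)) : ℝ)) := by
    apply div_le_div_of_nonneg_left (mul_nonneg he0 hq0.le) (mul_pos hL0 hn0)
    nlinarith
  have h6 : (eMin S m (m + s) * (S.hgt (m + s) (z S (m + s)) : ℝ)) /
        ((L : ℝ) * (S.hgt (m + s + 1) (z S (m + s + 1)) : ℝ))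
      ≤ ((Jset S m (m + s) (z S (m + s))).card : ℝ) /
        ((L : ℝ) * (S.hgt (m + s + 1) (z S (m + s + 1)) : ℝ)) :=
    (div_le_div_iff_of_pos_right (mul_pos hL0 hn0)).mpr hcardE
  have h7 : ((Jset S m (m + s) (z S (m + s))).card : ℝ) /
        ((L : ℝ) * (S.hgt (m + s + 1) (z S (m + s + 1)) : ℝ))
      = ((Jset S m (m + s) (z S (m + s))).card : ℝ) *
        (1 / ((L : ℝ) * (S.hgt (m + s + 1) (z S (m + s + 1)) : ℝ))) := by ring
  have h8 : ((Jset S m (m + s) (z S (m + s))).card : ℝ) *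
        (1 / ((L : ℝ) * (S.hgt (m + s + 1) (z S (m + s + 1)) : ℝ)))
      ≤ ((Jset S m (m + s) (z S (m + s))).card : ℝ) *
        (μ (S.base (m + s + 1) (z S (m + s + 1)))).toReal :=
    mul_le_mul_of_nonneg_left hβ (by positivity)
  rw [hstep1]
  linarith

end Measure

end NSM

/-- A linearly recurrent minimal Cantor system is not strongly mixing:
if `μ(B_1(m)) < 1/L²` then
`liminf_n μ(B_1(m) ∩ T^{h_1(n)} B_1(m)) ≥ μ(B_1(m))/L² > μ(B_1(m))²`. -/
theorem not_stronglyMixing_of_linearlyRecurrent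
    (T : X ≃ₜ X) (hmin : IsMinimal T) {L : ℕ} (S : LRCantor X T L)
    (μ : Measure X) [IsProbabilityMeasure μ] (hinv : MeasurePreserving T μ μ)
    (m : ℕ) (hm : (μ (S.base m ⟨0, S.C_pos m⟩)).toReal < 1 / (L : ℝ) ^ 2) :
    (1 / (L : ℝ) ^ 2) * (μ (S.base m ⟨0, S.C_pos m⟩)).toReal ≤
      Filter.atTop.liminf (fun n : ℕ =>
        (μ (S.base m ⟨0, S.C_pos m⟩ ∩
          (⇑T)^[S.hgt n ⟨0, S.C_pos n⟩] '' S.base m ⟨0, S.C_pos m⟩)).toReal) ∧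
    (μ (S.base m ⟨0, S.C_pos m⟩)).toReal ^ 2 <
      (1 / (L : ℝ) ^ 2) * (μ (S.base m ⟨0, S.C_pos m⟩)).toReal := by
  classical
  have hL : 1 ≤ L := by
    by_contra hL0
    have hL' : L = 0 := by omega
    have hz : (1 : ℝ) / (L : ℝ) ^ 2 ≤ 0 := by rw [hL']; norm_num
    have := ENNReal.toReal_nonneg (a := μ (S.base m ⟨0, S.C_pos m⟩))
    linarith
  have hLr : (0 : ℝ) < (L : ℝ) := by
    exact_mod_cast Nat.lt_of_lt_of_le Nat.zero_lt_one hL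
  have hpos : 0 < (μ (S.base m ⟨0, S.C_pos m⟩)).toReal := by
    have h := NSM.beta0_lb_real S hinv m hL
    have hh0 : (0 : ℝ) < (S.hgt m (NSM.z S m) : ℝ) := by exact_mod_cast S.hgt_pos m _
    have hh : (0 : ℝ) < 1 / ((L : ℝ) * (S.hgt m (NSM.z S m) : ℝ)) := by positivity
    exact lt_of_lt_of_le hh h
  constructor
  · -- liminf bound
    set μBr := (μ (S.base m ⟨0, S.C_pos m⟩)).toReal with hμBr
    set r : ℝ := 1 - 1 / (L : ℝ) with hr
    have hrecip : 0 < 1 / (L : ℝ) := by positivity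
    have hrecip1 : 1 / (L : ℝ) ≤ 1 := by
      rw [div_le_one hLr]
      exact_mod_cast hL
    have hr0 : 0 ≤ r := by rw [hr]; linarith
    have hr1 : r < 1 := by rw [hr]; linarith
    have hgeom : ∀ i : ℕ, μBr - NSM.eMin S m (m + i) ≤ r ^ i := by
      intro i
      induction i with
      | zero =>
        rw [pow_zero, Nat.add_zero]
        have h1 : μBr ≤ 1 := by
          rw [hμBr]
          simpa using ENNReal.toReal_mono ENNReal.one_ne_top
            (MeasureTheory.prob_le_one (μ := μ) (s := S.base m ⟨0, S.C_pos m⟩))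
        have h2 := NSM.eMin_nonneg S m m
        linarith
      | succ i ih =>
        have hc := NSM.contraction S hinv m (m + i) (Nat.le_add_right m i) hL
        have hzb : (μ (S.base m (NSM.z S m))).toReal = μBr := rfl
        rw [hzb] at hc
        have hrl : r * (μBr - NSM.eMin S m (m + i)) =
            (μBr - NSM.eMin S m (m + i)) - (μBr - NSM.eMin S m (m + i)) / (L : ℝ) := by
          rw [hr]; ring
        have hstep : μBr - NSM.eMin S m (m + (i + 1)) ≤ r * (μBr - NSM.eMin S m (m + i)) := by
          have hadd : m + (i + 1) = (m + i) + 1 := by omega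
          rw [hadd, hrl]
          linarith [hc]
        calc μBr - NSM.eMin S m (m + (i + 1)) ≤ r * (μBr - NSM.eMin S m (m + i)) := hstep
          _ ≤ r * r ^ i := mul_le_mul_of_nonneg_left ih hr0
          _ = r ^ (i + 1) := by ring
    have hflb : ∀ i : ℕ, μBr / (L : ℝ) ^ 2 - r ^ i / (L : ℝ) ^ 2 ≤
        (μ (S.base m ⟨0, S.C_pos m⟩ ∩
          (⇑T)^[S.hgt (m + i + 1) ⟨0, S.C_pos (m + i + 1)⟩] ''
            S.base m ⟨0, S.C_pos m⟩)).toReal := by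
      intro i
      have h1 := NSM.corr_lb S hinv m i hL
      have h2 := hgeom i
      have hL2 : (0 : ℝ) < (L : ℝ) ^ 2 := pow_pos hLr 2
      have h3 : (μBr - r ^ i) / (L : ℝ) ^ 2 ≤ NSM.eMin S m (m + i) / (L : ℝ) ^ 2 :=
        (div_le_div_iff_of_pos_right hL2).mpr (by linarith)
      calc μBr / (L : ℝ) ^ 2 - r ^ i / (L : ℝ) ^ 2
          = (μBr - r ^ i) / (L : ℝ) ^ 2 := by ring
        _ ≤ NSM.eMin S m (m + i) / (L : ℝ) ^ 2 := h3
        _ ≤ _ := h1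
    set f : ℕ → ℝ := fun n : ℕ =>
      (μ (S.base m ⟨0, S.C_pos m⟩ ∩
        (⇑T)^[S.hgt n ⟨0, S.C_pos n⟩] '' S.base m ⟨0, S.C_pos m⟩)).toReal with hf
    have hub : ∀ n, f n ≤ 1 := by
      intro n
      simp only [hf]
      simpa using ENNReal.toReal_mono ENNReal.one_ne_top
        (MeasureTheory.prob_le_one (μ := μ) (s := _))
    have hcb : Filter.IsCoboundedUnder (· ≥ ·) Filter.atTop f :=
      (Filter.isBoundedUnder_of ⟨1, hub⟩).isCoboundedUnder_ge
    apply le_of_forall_sub_le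
    intro ε hε
    have hten : Filter.Tendsto (fun i : ℕ => r ^ i) Filter.atTop (nhds 0) :=
      tendsto_pow_atTop_nhds_zero_of_lt_one hr0 hr1
    have hev : ∀ᶠ i in Filter.atTop, r ^ i < ε * (L : ℝ) ^ 2 :=
      hten.eventually_lt_const (mul_pos hε (pow_pos hLr 2))
    obtain ⟨i₀, hi₀⟩ := Filter.eventually_atTop.mp hev
    have hevf : ∀ᶠ n in Filter.atTop, 1 / (L : ℝ) ^ 2 * μBr - ε ≤ f n := by
      rw [Filter.eventually_atTop]
      refine ⟨m + i₀ + 1, fun n hn => ?_⟩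
      have hni : n = m + (n - m - 1) + 1 := by omega
      have h2 : r ^ (n - m - 1) < ε * (L : ℝ) ^ 2 := hi₀ (n - m - 1) (by omega)
      have h3 : r ^ (n - m - 1) / (L : ℝ) ^ 2 < ε := by
        rw [div_lt_iff₀ (pow_pos hLr 2)]
        linarith
      have h1 := hflb (n - m - 1)
      have hre : 1 / (L : ℝ) ^ 2 * μBr = μBr / (L : ℝ) ^ 2 := by ring
      have hfn : f n = (μ (S.base m ⟨0, S.C_pos m⟩ ∩
          (⇑T)^[S.hgt (m + (n - m - 1) + 1) ⟨0, S.C_pos (m + (n - m - 1) + 1)⟩] ''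
            S.base m ⟨0, S.C_pos m⟩)).toReal := by
        simp only [hf]
        rw [← hni]
      rw [hfn]
      linarith
    exact Filter.le_liminf_of_le hcb hevf
  · rw [sq]
    exact mul_lt_mul_of_pos_right hm hpos
end

section
/- Let $(X,T,\mu)$ be a linearly recurrent minimal Cantor system with constant $L$, and let $\lambda\in\mathbb{C}$ satisfy $\sum_{n=1}^\infty \max_{1\le k\le C(n)} |\lambda^{h_k(n)}-1| < \infty$. Then $\lambda$ is a continuous eigenvalue of $(X,T)$: there exists a continuous function $f:X\to\mathbb{C}$, $f\ne 0$, with $f\circ T = \lambda f$. -/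
open MeasureTheory Filter Topology

namespace LRHelper

variable {X : Type*} [TopologicalSpace X] {T : X ≃ₜ X} {L : ℕ}

noncomputable def K (S : LRCantor X T L) (n : ℕ) (x : X) : Fin (S.C n) :=
  (S.pieces_cover n x).choose

noncomputable def R (S : LRCantor X T L) (n : ℕ) (x : X) : ℕ :=
  (S.pieces_cover n x).choose_spec.choose

lemma R_lt (S : LRCantor X T L) (n : ℕ) (x : X) : R S n x < S.hgt n (K S n x) :=
  (S.pieces_cover n x).choose_spec.choose_spec.1

lemma mem_base (S : LRCantor X T L) (n : ℕ) (x : X) :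
    (⇑T)^[R S n x] x ∈ S.base n (K S n x) :=
  (S.pieces_cover n x).choose_spec.choose_spec.2

lemma unique (S : LRCantor X T L) {n : ℕ} {k : Fin (S.C n)} {j : ℕ} {x : X}
    (hj : j < S.hgt n k) (hx : (⇑T)^[j] x ∈ S.base n k) :
    k = K S n x ∧ j = R S n x := by
  by_contra h
  have hne : (k, j) ≠ (K S n x, R S n x) := by
    intro he
    exact h ⟨congrArg Prod.fst he, congrArg Prod.snd he⟩
  have hd := S.pieces_disjoint n k (K S n x) j (R S n x) hj (R_lt S n x) hne
  exact Set.disjoint_left.mp hd hx (mem_base S n x)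

lemma R_zero (S : LRCantor X T L) (x : X) : R S 0 x = 0 := by
  have h := R_lt S 0 x
  rw [S.hgt_zero] at h
  omega

lemma K_T (S : LRCantor X T L) {n : ℕ} {x : X} (h : 0 < R S n x) :
    K S n (T x) = K S n x ∧ R S n (T x) = R S n x - 1 := by
  have h1 : (⇑T)^[R S n x - 1] (T x) ∈ S.base n (K S n x) := by
    have e : (⇑T)^[R S n x - 1] (T x) = (⇑T)^[R S n x] x := by
      rw [← Function.iterate_succ_apply]
      congr 1
      omega
    rw [e]
    exact mem_base S n x
  have h2 : R S n x - 1 < S.hgt n (K S n x) := by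
    have := R_lt S n x; omega
  obtain ⟨hk, hr⟩ := unique S h2 h1
  exact ⟨hk.symm, hr.symm⟩

lemma R_T_zero (S : LRCantor X T L) {n : ℕ} {x : X} (h : R S n x = 0) :
    R S n (T x) = S.hgt n (K S n (T x)) - 1 := by
  have hj : R S n (T x) < S.hgt n (K S n (T x)) := R_lt S n (T x)
  by_contra hne
  have hlt : R S n (T x) + 1 < S.hgt n (K S n (T x)) := by omega
  have hx : (⇑T)^[R S n (T x) + 1] x ∈ S.base n (K S n (T x)) := by
    rw [Function.iterate_succ_apply]
    exact mem_base S n (T x)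
  obtain ⟨hk, hr⟩ := unique S hlt hx
  omega

lemma R_le (S : LRCantor X T L) (n : ℕ) : ∀ (j : ℕ) (x : X), R S (n+1) x = j → R S n x ≤ j := by
  intro j
  induction j with
  | zero =>
    intro x hx
    have hx0 : x ∈ S.base (n+1) (K S (n+1) x) := by
      have h := mem_base S (n+1) x
      rw [hx] at h
      simpa using h
    have hmem : x ∈ ⋃ k, S.base n k := S.KR1 n (Set.mem_iUnion.mpr ⟨_, hx0⟩)
    obtain ⟨k, hk⟩ := Set.mem_iUnion.mp hmem
    have := (unique S (S.hgt_pos n k) (by simpa using hk)).2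
    omega
  | succ j ih =>
    intro x hx
    have hpos : 0 < R S (n+1) x := by omega
    have hT := (K_T S hpos).2
    have hRT : R S (n+1) (T x) = j := by omega
    have hIH := ih (T x) hRT
    rcases Nat.eq_zero_or_pos (R S n x) with h0 | hp
    · omega
    · have := (K_T S (n := n) hp).2; omega

lemma R_mono (S : LRCantor X T L) (n : ℕ) (x : X) : R S n x ≤ R S (n+1) x :=
  R_le S n _ x rfl

lemma locally_const (S : LRCantor X T L) (n : ℕ) (x : X) :
    ∃ U : Set X, IsOpen U ∧ x ∈ U ∧ ∀ y ∈ U, R S n y = R S n x := by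
  refine ⟨(⇑T)^[R S n x] ⁻¹' S.base n (K S n x),
    ((S.clopen n _).preimage (T.continuous.iterate _)).isOpen, mem_base S n x, ?_⟩
  intro y hy
  exact ((unique S (R_lt S n x) hy).2).symm

end LRHelper

variable {X : Type*} [TopologicalSpace X] [CompactSpace X] [TopologicalSpace.MetrizableSpace X]
  [TotallyDisconnectedSpace X] [PerfectSpace X] [Nonempty X]
/-- If `∑_n max_k |λ^{h_k(n)} - 1| < ∞`, then `λ` is a continuous
eigenvalue of the linearly recurrent minimal Cantor system `(X,T)`. -/
theorem isContinuousEigenvalue_of_summable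
    (T : X ≃ₜ X) (hmin : IsMinimal T) {L : ℕ} (S : LRCantor X T L)
    (lam : ℂ)
    (hsum : Summable fun n : ℕ =>
      ⨆ k : Fin (S.C n), ‖lam ^ S.hgt n k - 1‖) :
    IsContinuousEigenvalue T lam := by
  classical
  have hεge : ∀ (n : ℕ) (k : Fin (S.C n)),
      ‖lam ^ S.hgt n k - 1‖ ≤ ⨆ k : Fin (S.C n), ‖lam ^ S.hgt n k - 1‖ := by
    intro n k
    exact le_ciSup (f := fun k : Fin (S.C n) => ‖lam ^ S.hgt n k - 1‖)
      ((Set.finite_range _).bddAbove) k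
  set ε : ℕ → ℝ := fun n => ⨆ k : Fin (S.C n), ‖lam ^ S.hgt n k - 1‖ with hεdef
  have hεnn : ∀ n, 0 ≤ ε n := fun n => le_trans (norm_nonneg _) (hεge n ⟨0, S.C_pos n⟩)
  have hε0 : Tendsto ε atTop (𝓝 0) := hsum.tendsto_atTop_zero
  -- |lam| = 1
  have hnl : ‖lam‖ = 1 := by
    by_contra hne
    have hpos : 0 < |1 - ‖lam‖| := abs_pos.mpr (sub_ne_zero.mpr fun h => hne h.symm)
    have hgt1 : ∀ n, |1 - ‖lam‖| ≤ ε n := by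
      intro n
      set k : Fin (S.C n) := ⟨0, S.C_pos n⟩ with hk
      have h1 : 0 < S.hgt n k := S.hgt_pos n k
      refine le_trans ?_ (hεge n k)
      have h2 : |‖lam ^ S.hgt n k‖ - ‖(1:ℂ)‖| ≤ ‖lam ^ S.hgt n k - 1‖ :=
        abs_norm_sub_norm_le _ _
      rw [norm_one, norm_pow] at h2
      refine le_trans ?_ h2
      rcases le_or_gt 1 ‖lam‖ with hge | hlt
      · have h3 : ‖lam‖ ≤ ‖lam‖ ^ S.hgt n k := le_self_pow₀ hge (by omega)
        rw [abs_sub_comm, abs_of_nonneg (by linarith), abs_of_nonneg (by linarith)]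
        linarith
      · have h3 : ‖lam‖ ^ S.hgt n k ≤ ‖lam‖ :=
          pow_le_of_le_one (norm_nonneg _) (le_of_lt hlt) (by omega)
        rw [abs_of_nonneg (by linarith), abs_of_nonpos (by linarith)]
        linarith
    obtain ⟨n, hn⟩ := (hε0.eventually_lt_const hpos).exists
    exact absurd (hgt1 n) (not_le.mpr hn)
  have hlam0 : lam ≠ 0 := by
    intro h; rw [h] at hnl; simp at hnl
  have hnp : ∀ a : ℕ, ‖lam ^ a‖ = 1 := by
    intro a; rw [norm_pow, hnl, one_pow]
  have hni : ∀ a : ℕ, ‖lam⁻¹ ^ a‖ = 1 := by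
    intro a; rw [norm_pow, norm_inv, hnl, inv_one, one_pow]
  have hpow : ∀ a b c d : ℕ, a + d = c + b → lam ^ a * lam⁻¹ ^ b = lam ^ c * lam⁻¹ ^ d := by
    intro a b c d h
    rw [inv_pow, inv_pow]
    field_simp
    rw [← pow_add, ← pow_add, h, add_comm]
  have hμ1 : ∀ a : ℕ, ‖lam⁻¹ ^ a - 1‖ = ‖lam ^ a - 1‖ := by
    intro a
    have e : lam ^ a * (lam⁻¹ ^ a - 1) = 1 - lam ^ a := by
      rw [mul_sub, mul_one, ← mul_pow, mul_inv_cancel₀ hlam0, one_pow]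
    calc ‖lam⁻¹ ^ a - 1‖ = ‖lam ^ a‖ * ‖lam⁻¹ ^ a - 1‖ := by rw [hnp, one_mul]
      _ = ‖lam ^ a * (lam⁻¹ ^ a - 1)‖ := (norm_mul _ _).symm
      _ = ‖1 - lam ^ a‖ := by rw [e]
      _ = ‖lam ^ a - 1‖ := norm_sub_rev _ _
  have hLone : 1 ≤ L := by
    have h1 : S.hgt 1 ⟨0, S.C_pos 1⟩ ≤ L * 1 := by
      simpa [S.hgt_zero] using S.LR 0 ⟨0, S.C_pos 1⟩ ⟨0, S.C_pos 0⟩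
    have h2 := S.hgt_pos 1 ⟨0, S.C_pos 1⟩
    omega
  -- key estimate by induction down the (n+1)-tower
  have key : ∀ (n j : ℕ) (x : X), LRHelper.R S (n+1) x = j →
      ∃ c : ℕ, c * S.hgt (n+1) (LRHelper.K S (n+1) x) ≤ L * (j - LRHelper.R S n x) ∧
        ‖lam ^ j * lam⁻¹ ^ LRHelper.R S n x - 1‖ ≤ c * ε n := by
    intro n j
    induction j with
    | zero =>
      intro x hx
      have h0 : LRHelper.R S n x = 0 := by
        have := LRHelper.R_le S n 0 x hx; omega
      refine ⟨0, by simp, ?_⟩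
      rw [h0, pow_zero, pow_zero, mul_one, sub_self, norm_zero]
      simp
    | succ j ih =>
      intro x hx
      have hpos : 0 < LRHelper.R S (n+1) x := by omega
      have hKT := LRHelper.K_T S hpos
      have hRT : LRHelper.R S (n+1) (T x) = j := by
        have := hKT.2; omega
      obtain ⟨c, hc1, hc2⟩ := ih (T x) hRT
      rw [hKT.1] at hc1
      rcases Nat.eq_zero_or_pos (LRHelper.R S n x) with h0 | hp
      · -- crossing a level-n base
        have hRn : LRHelper.R S n (T x) = S.hgt n (LRHelper.K S n (T x)) - 1 :=
          LRHelper.R_T_zero S h0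
        set h := S.hgt n (LRHelper.K S n (T x)) with hhdef
        have hh1 : 0 < h := S.hgt_pos _ _
        have hle : h - 1 ≤ j := by
          have := LRHelper.R_le S n j (T x) hRT
          omega
        rw [hRn] at hc1 hc2
        refine ⟨c + 1, ?_, ?_⟩
        · have hLR := S.LR n (LRHelper.K S (n+1) x) (LRHelper.K S n (T x))
          calc (c + 1) * S.hgt (n+1) (LRHelper.K S (n+1) x)
              = c * S.hgt (n+1) (LRHelper.K S (n+1) x) + S.hgt (n+1) (LRHelper.K S (n+1) x) := by
                ring
            _ ≤ L * (j - (h - 1)) + L * h := Nat.add_le_add hc1 hLR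
            _ = L * ((j - (h - 1)) + h) := (Nat.mul_add _ _ _).symm
            _ = L * (j + 1) := by congr 1; omega
            _ = L * (j + 1 - LRHelper.R S n x) := by rw [h0, Nat.sub_zero]
        · rw [h0, pow_zero, mul_one]
          have e1 : lam ^ j * lam⁻¹ ^ (h - 1) * lam ^ h = lam ^ (j + 1) := by
            have e2 : lam ^ j * lam⁻¹ ^ (h - 1) * lam ^ h = lam ^ (j + h) * lam⁻¹ ^ (h - 1) := by
              rw [mul_right_comm, ← pow_add]
            rw [e2, hpow (j + h) (h - 1) (j + 1) 0 (by omega), pow_zero, mul_one]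
          have hfac : lam ^ (j + 1) - 1 =
              (lam ^ j * lam⁻¹ ^ (h - 1) - 1) * lam ^ h + (lam ^ h - 1) := by
            rw [sub_mul, one_mul, e1]; ring
          rw [hfac]
          calc ‖(lam ^ j * lam⁻¹ ^ (h - 1) - 1) * lam ^ h + (lam ^ h - 1)‖
              ≤ ‖(lam ^ j * lam⁻¹ ^ (h - 1) - 1) * lam ^ h‖ + ‖lam ^ h - 1‖ := norm_add_le _ _
            _ = ‖lam ^ j * lam⁻¹ ^ (h - 1) - 1‖ + ‖lam ^ h - 1‖ := by
                rw [norm_mul, hnp, mul_one]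
            _ ≤ c * ε n + ε n := add_le_add hc2 (hεge n _)
            _ = (↑(c + 1) : ℝ) * ε n := by push_cast; ring
      · -- staying inside a level-n tower
        have hK := LRHelper.K_T S (n := n) hp
        rw [hK.2] at hc1 hc2
        refine ⟨c, ?_, ?_⟩
        · have e : j - (LRHelper.R S n x - 1) = j + 1 - LRHelper.R S n x := by omega
          rw [e] at hc1
          exact hc1
        · have e : lam ^ (j + 1) * lam⁻¹ ^ LRHelper.R S n x
              = lam ^ j * lam⁻¹ ^ (LRHelper.R S n x - 1) := hpow _ _ _ _ (by omega)
          rw [e]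
          exact hc2
  -- uniform bound on the multiplicative defect
  have hd : ∀ (n : ℕ) (x : X),
      ‖lam ^ (LRHelper.R S (n+1) x - LRHelper.R S n x) - 1‖ ≤ (L : ℝ) * ε n := by
    intro n x
    obtain ⟨c, hc1, hc2⟩ := key n (LRHelper.R S (n+1) x) x rfl
    have hH : 0 < S.hgt (n+1) (LRHelper.K S (n+1) x) := S.hgt_pos _ _
    have hj : LRHelper.R S (n+1) x < S.hgt (n+1) (LRHelper.K S (n+1) x) := LRHelper.R_lt S _ x
    have hcL : c ≤ L := by
      have h2 : L * (LRHelper.R S (n+1) x - LRHelper.R S n x)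
          < L * S.hgt (n+1) (LRHelper.K S (n+1) x) :=
        mul_lt_mul_of_pos_left (by omega) (by omega : 0 < L)
      have h3 : c * S.hgt (n+1) (LRHelper.K S (n+1) x)
          < L * S.hgt (n+1) (LRHelper.K S (n+1) x) := lt_of_le_of_lt hc1 h2
      exact le_of_lt (lt_of_mul_lt_mul_right h3 (Nat.zero_le _))
    have e := hpow (LRHelper.R S (n+1) x) (LRHelper.R S n x)
      (LRHelper.R S (n+1) x - LRHelper.R S n x) 0 (by have := LRHelper.R_mono S n x; omega)
    rw [e, pow_zero, mul_one] at hc2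
    calc ‖lam ^ (LRHelper.R S (n+1) x - LRHelper.R S n x) - 1‖ ≤ (c : ℝ) * ε n := hc2
      _ ≤ (L : ℝ) * ε n := mul_le_mul_of_nonneg_right (by exact_mod_cast hcL) (hεnn n)
  -- the approximating eigenfunctions and their differences
  have hcont : ∀ n : ℕ, Continuous fun x => lam⁻¹ ^ LRHelper.R S n x := by
    intro n
    apply IsLocallyConstant.continuous (f := fun x => lam⁻¹ ^ LRHelper.R S n x)
    rw [IsLocallyConstant.iff_exists_open]
    intro x
    obtain ⟨U, hU, hxU, hRU⟩ := LRHelper.locally_const S n x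
    exact ⟨U, hU, hxU, fun y hy => by rw [hRU y hy]⟩
  set g : ℕ → X → ℂ := fun n x => lam⁻¹ ^ LRHelper.R S (n+1) x - lam⁻¹ ^ LRHelper.R S n x
    with hgdef
  have hgbound : ∀ (n : ℕ) (x : X), ‖g n x‖ ≤ (L : ℝ) * ε n := by
    intro n x
    have hmono := LRHelper.R_mono S n x
    have e : g n x = lam⁻¹ ^ LRHelper.R S n x
        * (lam⁻¹ ^ (LRHelper.R S (n+1) x - LRHelper.R S n x) - 1) := by
      simp only [hgdef]
      rw [mul_sub, mul_one, ← pow_add]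
      congr 2
      omega
    rw [e, norm_mul, hni, one_mul, hμ1]
    exact hd n x
  have hgcont : ∀ n, Continuous (g n) := fun n => (hcont (n+1)).sub (hcont n)
  have hu : Summable (fun n => (L : ℝ) * ε n) := hsum.mul_left _
  set f : X → ℂ := fun x => 1 + ∑' n, g n x with hfdef
  have hfc : Continuous f := continuous_const.add (continuous_tsum hgcont hu fun n x => hgbound n x)
  have hgsum : ∀ x, Summable (fun n => g n x) :=
    fun x => Summable.of_norm_bounded hu fun n => hgbound n x
  have hptend : ∀ x : X, Tendsto (fun N => lam⁻¹ ^ LRHelper.R S N x) atTop (𝓝 (f x)) := by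
    intro x
    have h1 := (hgsum x).hasSum.tendsto_sum_nat
    have h2 : ∀ N, ∑ i ∈ Finset.range N, g i x = lam⁻¹ ^ LRHelper.R S N x - 1 := by
      intro N
      have := Finset.sum_range_sub (fun i => lam⁻¹ ^ LRHelper.R S i x) N
      simpa [hgdef, LRHelper.R_zero] using this
    simp only [h2] at h1
    have h4 : Tendsto (fun N => (lam⁻¹ ^ LRHelper.R S N x - 1) + 1) atTop
        (𝓝 ((∑' n, g n x) + 1)) := h1.add tendsto_const_nhds
    simpa [hfdef, sub_add_cancel, add_comm] using h4
  have hfnorm : ∀ x, ‖f x‖ = 1 := by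
    intro x
    have h1 : Tendsto (fun N => ‖lam⁻¹ ^ LRHelper.R S N x‖) atTop (𝓝 ‖f x‖) :=
      (continuous_norm.tendsto _).comp (hptend x)
    have h2 : (fun N => ‖lam⁻¹ ^ LRHelper.R S N x‖) = fun _ => (1 : ℝ) :=
      funext fun N => hni _
    rw [h2] at h1
    exact tendsto_nhds_unique h1 tendsto_const_nhds
  refine ⟨f, hfc, ?_, ?_⟩
  · intro h0
    obtain ⟨x⟩ := (inferInstance : Nonempty X)
    have h1 := hfnorm x
    rw [h0] at h1
    simp at h1
  · intro x
    have h1 : Tendsto (fun N => lam⁻¹ ^ LRHelper.R S N (T x)) atTop (𝓝 (f (T x))) :=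
      hptend (T x)
    have h2 : Tendsto (fun N => lam * lam⁻¹ ^ LRHelper.R S N x) atTop (𝓝 (lam * f x)) :=
      (hptend x).const_mul lam
    have h3 : ∀ N, ‖lam⁻¹ ^ LRHelper.R S N (T x) - lam * lam⁻¹ ^ LRHelper.R S N x‖ ≤ ε N := by
      intro N
      rcases Nat.eq_zero_or_pos (LRHelper.R S N x) with h0 | hp
      · have hR := LRHelper.R_T_zero S h0
        set h := S.hgt N (LRHelper.K S N (T x)) with hhdef
        have hh1 : 0 < h := S.hgt_pos _ _
        have e : lam⁻¹ ^ LRHelper.R S N (T x) - lam * lam⁻¹ ^ LRHelper.R S N x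
            = lam * (lam⁻¹ ^ h - 1) := by
          rw [hR, h0, pow_zero, mul_one, mul_sub, mul_one]
          congr 1
          have := hpow 0 (h - 1) 1 h (by omega)
          simpa using this
        rw [e, norm_mul, hnl, one_mul, hμ1]
        exact hεge N (LRHelper.K S N (T x))
      · have hK := LRHelper.K_T S hp
        have e : lam⁻¹ ^ LRHelper.R S N (T x) = lam * lam⁻¹ ^ LRHelper.R S N x := by
          rw [hK.2]
          have := hpow 0 (LRHelper.R S N x - 1) 1 (LRHelper.R S N x) (by omega)
          simpa using this
        rw [e, sub_self, norm_zero]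
        exact hεnn N
    have h4 : Tendsto (fun N => lam⁻¹ ^ LRHelper.R S N (T x)
        - lam * lam⁻¹ ^ LRHelper.R S N x) atTop (𝓝 (f (T x) - lam * f x)) := h1.sub h2
    have h5 : Tendsto (fun N => lam⁻¹ ^ LRHelper.R S N (T x)
        - lam * lam⁻¹ ^ LRHelper.R S N x) atTop (𝓝 0) := squeeze_zero_norm h3 hε0
    exact sub_eq_zero.mp (tendsto_nhds_unique h4 h5)
end

section
/- Let $(X,T,\mu)$ be a linearly recurrent minimal Cantor system and let $m\in\mathbb{N}$. If $\alpha$ is rational with denominator dividing $\gcd(h_1(m),\dots,h_{C(m)}(m))$, then $\lambda=\exp(2i\pi\alpha)$ is a continuous eigenvalue of $(X,T)$. -/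
open MeasureTheory Filter Topology

variable {X : Type*} [TopologicalSpace X] [CompactSpace X] [TopologicalSpace.MetrizableSpace X]
  [TotallyDisconnectedSpace X] [PerfectSpace X] [Nonempty X]
variable [MeasurableSpace X] [BorelSpace X]

/-- If `α` is rational with denominator dividing
`gcd(h_1(m),…,h_{C(m)}(m))` (equivalently `α·gcd(h_i(m)) ∈ ℤ`), then
`λ = e^{2iπα}` is a continuous eigenvalue of `(X,T)`. -/
theorem isContinuousEigenvalue_of_rational_gcd
    (T : X ≃ₜ X) (hmin : IsMinimal T) {L : ℕ} (S : LRCantor X T L)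
    (μ : Measure X) [IsProbabilityMeasure μ] (hinv : MeasurePreserving T μ μ)
    (m : ℕ) (α : ℝ)
    (hα : ∃ p : ℤ, α * (Finset.univ.gcd fun k : Fin (S.C m) => S.hgt m k) = (p : ℝ)) :
    IsContinuousEigenvalue T (Complex.exp (2 * Real.pi * Complex.I * α)) := by
  classical
  obtain ⟨p, hp⟩ := hα
  set lam := Complex.exp (2 * Real.pi * Complex.I * α) with hlamdef
  have hlam_ne : lam ≠ 0 := Complex.exp_ne_zero _
  set g : ℕ := Finset.univ.gcd fun k : Fin (S.C m) => S.hgt m k with hgdef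
  have hlam_g : lam ^ g = 1 := by
    rw [hlamdef, ← Complex.exp_nat_mul]
    have hpc : (α : ℂ) * (g : ℂ) = (p : ℂ) := by exact_mod_cast congrArg Complex.ofReal hp
    have h1 : (g : ℂ) * (2 * (Real.pi : ℂ) * Complex.I * (α : ℂ))
        = (p : ℂ) * (2 * (Real.pi : ℂ) * Complex.I) := by
      linear_combination (2 * (Real.pi : ℂ) * Complex.I) * hpc
    rw [h1, Complex.exp_int_mul_two_pi_mul_I]
  have hlam_h : ∀ k : Fin (S.C m), lam ^ (S.hgt m k) = 1 := by
    intro k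
    obtain ⟨c, hc⟩ : g ∣ S.hgt m k := Finset.gcd_dvd (Finset.mem_univ k)
    rw [hc, pow_mul, hlam_g, one_pow]
  -- uniqueness of the piece containing a point
  have uniq : ∀ (x : X) (k k' : Fin (S.C m)) (j j' : ℕ), j < S.hgt m k → j' < S.hgt m k' →
      (⇑T)^[j] x ∈ S.base m k → (⇑T)^[j'] x ∈ S.base m k' → k = k' ∧ j = j' := by
    intro x k k' j j' hj hj' hx hx'
    by_contra hne
    have hne' : (k, j) ≠ (k', j') := by
      intro h
      exact hne ⟨congrArg Prod.fst h, congrArg Prod.snd h⟩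
    exact Set.disjoint_left.mp (S.pieces_disjoint m k k' j j' hj hj' hne') hx hx'
  choose K J hJ hmem using S.pieces_cover m
  set f : X → ℂ := fun x => lam ^ (-(J x : ℤ)) with hfdef
  refine ⟨f, ?_, ?_, ?_⟩
  · -- continuity: f is locally constant
    rw [continuous_iff_continuousAt]
    intro x
    have hU : IsOpen ((⇑T)^[J x] ⁻¹' S.base m (K x)) :=
      ((S.clopen m (K x)).preimage (T.continuous.iterate _)).isOpen
    have hev : f =ᶠ[nhds x] fun _ => f x := by
      filter_upwards [hU.mem_nhds (hmem x)] with y hy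
      have h := uniq y (K y) (K x) (J y) (J x) (hJ y) (hJ x) (hmem y) hy
      simp only [hfdef, h.2]
    exact hev.continuousAt
  · -- nonvanishing
    intro h
    obtain ⟨x⟩ := ‹Nonempty X›
    have hx : f x = 0 := congrFun h x
    exact zpow_ne_zero _ hlam_ne hx
  · -- eigenvalue equation
    intro x
    show lam ^ (-(J (T x) : ℤ)) = lam * lam ^ (-(J x : ℤ))
    cases hJx : J x with
    | zero =>
      -- x is at the top of its tower; T x enters the bottom of a new tower
      have hx0 : (⇑T)^[0] x ∈ S.base m (K x) := by
        rw [← hJx]; exact hmem x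
      have h1 : (⇑T)^[J (T x) + 1] x ∈ S.base m (K (T x)) := by
        rw [Function.iterate_succ_apply]
        exact hmem (T x)
      have h2 : J (T x) + 1 = S.hgt m (K (T x)) := by
        by_contra h
        have hlt : J (T x) + 1 < S.hgt m (K (T x)) :=
          lt_of_le_of_ne (Nat.succ_le_of_lt (hJ (T x))) h
        have h0lt : (0 : ℕ) < S.hgt m (K x) := S.hgt_pos m (K x)
        have := uniq x (K (T x)) (K x) (J (T x) + 1) 0 hlt h0lt h1 hx0
        exact Nat.succ_ne_zero _ this.2
      have hone : lam ^ (J (T x) + 1) = 1 := by rw [h2]; exact hlam_h _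
      have h3 : lam * lam ^ (J (T x)) = 1 := by
        rw [← pow_succ']; exact hone
      calc lam ^ (-(J (T x) : ℤ)) = (lam ^ (J (T x)))⁻¹ := by
            rw [zpow_neg, zpow_natCast]
        _ = lam := inv_eq_of_mul_eq_one_left h3
        _ = lam * lam ^ (-((0 : ℕ) : ℤ)) := by simp
    | succ i =>
      -- T x moves one step up in the same tower
      have h1 : (⇑T)^[i] (T x) ∈ S.base m (K x) := by
        have h0 := hmem x
        rw [hJx, Function.iterate_succ_apply] at h0
        exact h0
      have hi : i < S.hgt m (K x) := by
        have h0 := hJ x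
        rw [hJx] at h0
        exact Nat.lt_of_succ_lt h0
      have h := uniq (T x) (K (T x)) (K x) (J (T x)) i (hJ (T x)) hi (hmem (T x)) h1
      rw [h.2]
      rw [show (-(i : ℤ)) = 1 + -(((i : ℕ) + 1 : ℕ) : ℤ) by push_cast; ring,
        zpow_add₀ hlam_ne, zpow_one]
end

section
/- Let $(M(n))_{n\ge 2}$ be a sequence of $2\times 2$ integer matrices with entries in $\{1,\dots,L\}$ and determinant $\pm 1$, let $P(n)=M(n)\cdots M(2)$ with entries $\begin{pmatrix}x_n & y_n\\ z_n & w_n\end{pmatrix}$, and set $h_1(n)=x_n+y_n$, $h_2(n)=z_n+w_n$. Suppose $x_n/h_1(n)\to\mu_1$ and $z_n/h_2(n)\to\mu_1$ as $n\to\infty$ for some $\mu_1\in[0,1]$, and set $\mu_2=1-\mu_1$. Then for $v=(\mu_2,-\mu_1)^t$ there is a constant $C$ with $\|P(n)v\|\le C2^{-n}$ for all $n$; in particular $\|P(n)v\|\to 0$ exponentially. -/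
open Filter Topology

lemma aux_decay (L : ℝ) (x h : ℕ → ℝ) (μ : ℝ)
    (hpos : ∀ n : ℕ, 1 ≤ n → (2:ℝ)^n ≤ 2 * h n)
    (hmono : ∀ n : ℕ, 1 ≤ n → h n ≤ h (n+1))
    (hkey : ∀ n : ℕ, 1 ≤ n → |x (n+1) * h n - x n * h (n+1)| ≤ L)
    (hlim : Tendsto (fun n => x n / h n) atTop (nhds μ)) :
    ∀ n : ℕ, 1 ≤ n → |x n - h n * μ| ≤ 2 * L * (2:ℝ)⁻¹ ^ n := by
  have hL : 0 ≤ L := le_trans (abs_nonneg _) (hkey 1 le_rfl)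
  have hpos' : ∀ n : ℕ, 1 ≤ n → 0 < h n := by
    intro n hn
    have := hpos n hn
    have h2 : (0:ℝ) < 2^n := by positivity
    linarith
  have hmono' : ∀ n m : ℕ, 1 ≤ n → n ≤ m → h n ≤ h m := by
    intro n m hn hnm
    induction m, hnm using Nat.le_induction with
    | base => exact le_refl _
    | succ m hm ih => exact le_trans ih (hmono m (le_trans hn hm))
  intro n hn
  -- step bounds
  have step : ∀ k : ℕ, n ≤ k →
      |h n * (x (k+1) / h (k+1)) - h n * (x k / h k)| ≤ L * (2:ℝ)⁻¹ ^ k := by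
    intro k hk
    have hk1 : 0 < h k := hpos' k (le_trans hn hk)
    have hk2 : 0 < h (k+1) := hpos' (k+1) (by omega)
    have hnk : h n ≤ h k := hmono' n k hn hk
    have hn0 : 0 < h n := hpos' n hn
    have hk2' : (2:ℝ)^k ≤ h (k+1) := by
      have := hpos (k+1) (by omega)
      rw [pow_succ] at this; linarith
    have e : h n * (x (k+1) / h (k+1)) - h n * (x k / h k)
        = (h n * (x (k+1) * h k - x k * h (k+1))) / (h k * h (k+1)) := by
      field_simp
    rw [e, abs_div, abs_of_pos (mul_pos hk1 hk2), div_le_iff₀ (mul_pos hk1 hk2), abs_mul,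
      abs_of_pos hn0]
    have hnum : |x (k+1) * h k - x k * h (k+1)| ≤ L := hkey k (le_trans hn hk)
    have hone : (1:ℝ) ≤ (2:ℝ)⁻¹ ^ k * h (k+1) := by
      have h1 : (2:ℝ)⁻¹ ^ k * (2:ℝ)^k = 1 := by
        rw [← mul_pow]; norm_num
      have h2 : (2:ℝ)⁻¹ ^ k * (2:ℝ)^k ≤ (2:ℝ)⁻¹ ^ k * h (k+1) :=
        mul_le_mul_of_nonneg_left hk2' (by positivity)
      linarith
    have habs : 0 ≤ |x (k+1) * h k - x k * h (k+1)| := abs_nonneg _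
    nlinarith [mul_le_mul_of_nonneg_left hnum hn0.le,
      mul_nonneg hL hk1.le, mul_le_mul_of_nonneg_left hone (mul_nonneg hL hk1.le)]
  have main : ∀ m : ℕ, n ≤ m →
      |h n * (x m / h m) - x n| ≤ 2 * L * ((2:ℝ)⁻¹ ^ n - (2:ℝ)⁻¹ ^ m) := by
    intro m hm
    induction m, hm using Nat.le_induction with
    | base =>
      rw [mul_div_cancel₀ _ (hpos' n hn).ne', sub_self, abs_zero]
      simp
    | succ m hm ih =>
      have t := step m hm
      calc |h n * (x (m+1) / h (m+1)) - x n|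
          ≤ |h n * (x (m+1) / h (m+1)) - h n * (x m / h m)| + |h n * (x m / h m) - x n| := by
            exact abs_sub_le _ _ _
        _ ≤ L * (2:ℝ)⁻¹ ^ m + 2 * L * ((2:ℝ)⁻¹ ^ n - (2:ℝ)⁻¹ ^ m) := add_le_add t ih
        _ = 2 * L * ((2:ℝ)⁻¹ ^ n - (2:ℝ)⁻¹ ^ (m+1)) := by rw [pow_succ]; ring
  have T : Tendsto (fun m => |h n * (x m / h m) - x n|) atTop (nhds |h n * μ - x n|) :=
    (((hlim.const_mul (h n)).sub_const (x n)).abs)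
  have final : |h n * μ - x n| ≤ 2 * L * (2:ℝ)⁻¹ ^ n := by
    refine le_of_tendsto T ?_
    filter_upwards [eventually_ge_atTop n] with m hm
    have := main m hm
    have hp : (0:ℝ) ≤ (2:ℝ)⁻¹ ^ m := by positivity
    nlinarith
  rw [abs_sub_comm] at final
  exact final

/-- For products `P n = M n ⋯ M 2` of `2 × 2` integer matrices with
entries in `{1,…,L}` and determinant `±1`, writing `P n = !![xₙ, yₙ; zₙ, wₙ]`,
`h₁(n) = xₙ + yₙ`, `h₂(n) = zₙ + wₙ`, if `xₙ/h₁(n) → μ₁` and `zₙ/h₂(n) → μ₁`,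
then for `v = (μ₂, -μ₁)` with `μ₂ = 1 - μ₁` there is a constant `C` with
`‖P n • v‖ ≤ C 2⁻ⁿ` for all `n ≥ 1`. -/
theorem exponential_decay_two_by_two_unimodular
    (L : ℕ) (M : ℕ → Matrix (Fin 2) (Fin 2) ℤ)
    (hent : ∀ n : ℕ, 2 ≤ n → ∀ i j : Fin 2, 1 ≤ M n i j ∧ M n i j ≤ (L : ℤ))
    (hdet : ∀ n : ℕ, 2 ≤ n → (M n).det = 1 ∨ (M n).det = -1)
    (P : ℕ → Matrix (Fin 2) (Fin 2) ℤ)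
    (hP1 : P 1 = 1) (hPrec : ∀ n : ℕ, 1 ≤ n → P (n+1) = M (n+1) * P n)
    (μ₁ : ℝ) (hμ₁ : μ₁ ∈ Set.Icc (0 : ℝ) 1)
    (hx : Tendsto (fun n : ℕ => (P n 0 0 : ℝ) / ((P n 0 0 : ℝ) + (P n 0 1 : ℝ)))
      atTop (nhds μ₁))
    (hz : Tendsto (fun n : ℕ => (P n 1 0 : ℝ) / ((P n 1 0 : ℝ) + (P n 1 1 : ℝ)))
      atTop (nhds μ₁)) :
    ∃ C : ℝ, ∀ n : ℕ, 1 ≤ n →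
      ‖((P n).map (Int.cast : ℤ → ℝ)).mulVec ![1 - μ₁, -μ₁]‖ ≤ C * (2 : ℝ)⁻¹ ^ n := by
  have fin2 : ∀ i : Fin 2, i = 0 ∨ i = 1 := by decide
  -- row sums
  set H : ℕ → Fin 2 → ℤ := fun n i => P n i 0 + P n i 1 with hHdef
  have hH : ∀ n : ℕ, 1 ≤ n → ∀ i : Fin 2, (2:ℤ)^n ≤ 2 * H n i := by
    intro n hn
    induction n, hn using Nat.le_induction with
    | base =>
      intro i
      simp only [hHdef, hP1]
      fin_cases i <;> simp [Matrix.one_apply]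
    | succ n hn ih =>
      intro i
      have e : H (n+1) i = M (n+1) i 0 * H n 0 + M (n+1) i 1 * H n 1 := by
        simp only [hHdef, hPrec n hn, Matrix.mul_apply, Fin.sum_univ_two]
        ring
      have m0 := (hent (n+1) (by omega) i 0).1
      have m1 := (hent (n+1) (by omega) i 1).1
      have i0 := ih 0
      have i1 := ih 1
      have hp : (0:ℤ) < 2^n := by positivity
      rw [e, pow_succ]
      nlinarith
  have hHpos : ∀ n : ℕ, 1 ≤ n → ∀ i : Fin 2, 0 < H n i := by
    intro n hn i
    have := hH n hn i
    have hp : (0:ℤ) < 2^n := by positivity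
    linarith
  have hHmono : ∀ n : ℕ, 1 ≤ n → ∀ i : Fin 2, H n i ≤ H (n+1) i := by
    intro n hn i
    have e : H (n+1) i = M (n+1) i 0 * H n 0 + M (n+1) i 1 * H n 1 := by
      simp only [hHdef, hPrec n hn, Matrix.mul_apply, Fin.sum_univ_two]
      ring
    have m0 := (hent (n+1) (by omega) i 0).1
    have m1 := (hent (n+1) (by omega) i 1).1
    have i0 := hHpos n hn 0
    have i1 := hHpos n hn 1
    rw [e]
    rcases fin2 i with rfl | rfl <;> nlinarith
  have hdetP : ∀ n : ℕ, 1 ≤ n → (P n).det = 1 ∨ (P n).det = -1 := by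
    intro n hn
    induction n, hn using Nat.le_induction with
    | base => left; rw [hP1]; simp
    | succ n hn ih =>
      rw [hPrec n hn, Matrix.det_mul]
      rcases hdet (n+1) (by omega) with h | h <;> rcases ih with h' | h' <;>
        simp [h, h']
  -- key identities
  have hkey : ∀ n : ℕ, 1 ≤ n → ∀ i : Fin 2,
      |P (n+1) i 0 * H n i - P n i 0 * H (n+1) i| ≤ (L : ℤ) := by
    intro n hn i
    have e : P (n+1) i 0 * H n i - P n i 0 * H (n+1) i
        = (if i = 0 then -(M (n+1) 0 1) else M (n+1) 1 0) * (P n).det := by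
      rcases fin2 i with rfl | rfl <;>
        · simp only [hHdef, hPrec n hn, Matrix.mul_apply, Fin.sum_univ_two,
            Matrix.det_fin_two]
          norm_num
          ring
    have hd : |(P n).det| = 1 := by
      rcases hdetP n hn with h | h <;> simp [h]
    rw [e, abs_mul, hd, mul_one]
    rcases fin2 i with rfl | rfl
    · rw [if_pos rfl, abs_neg, abs_of_pos (by linarith [(hent (n+1) (by omega) 0 1).1])]
      exact (hent (n+1) (by omega) 0 1).2
    · rw [if_neg (by decide), abs_of_pos (by linarith [(hent (n+1) (by omega) 1 0).1])]
      exact (hent (n+1) (by omega) 1 0).2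
  -- real versions, apply aux
  have row : ∀ i : Fin 2, ∀ n : ℕ, 1 ≤ n →
      |(P n i 0 : ℝ) - ((P n i 0 : ℝ) + (P n i 1 : ℝ)) * μ₁| ≤ 2 * (L:ℝ) * (2:ℝ)⁻¹ ^ n := by
    intro i
    refine aux_decay (L:ℝ) (fun n => (P n i 0 : ℝ)) (fun n => (P n i 0 : ℝ) + (P n i 1 : ℝ)) μ₁
      ?_ ?_ ?_ ?_
    · intro n hn
      have h2 := hH n hn i
      simp only [hHdef] at h2
      have h3 : (((2:ℤ)^n : ℤ) : ℝ) ≤ ((2 * (P n i 0 + P n i 1) : ℤ) : ℝ) := Int.cast_le.mpr h2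
      push_cast at h3
      exact h3
    · intro n hn
      have := hHmono n hn i
      simp only [hHdef] at this
      push_cast
      exact_mod_cast this
    · intro n hn
      have := hkey n hn i
      simp only [hHdef] at this
      have h2 : |(((P (n+1) i 0 * (P n i 0 + P n i 1)
          - P n i 0 * (P (n+1) i 0 + P (n+1) i 1) : ℤ)) : ℝ)| ≤ (L:ℝ) := by
        exact_mod_cast this
      push_cast at h2
      convert h2 using 2 <;> ring
    · rcases fin2 i with rfl | rfl
      · exact hx
      · exact hz
  refine ⟨2 * (L:ℝ), fun n hn => ?_⟩
  have hC : (0:ℝ) ≤ 2 * (L:ℝ) * (2:ℝ)⁻¹ ^ n := by positivity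
  rw [mul_assoc] at hC ⊢
  refine (pi_norm_le_iff_of_nonneg hC).mpr fun i => ?_
  have comp : ((P n).map (Int.cast : ℤ → ℝ)).mulVec ![1 - μ₁, -μ₁] i
      = (P n i 0 : ℝ) - ((P n i 0 : ℝ) + (P n i 1 : ℝ)) * μ₁ := by
    simp [Matrix.mulVec, dotProduct, Fin.sum_univ_two, Matrix.map_apply]
    ring
  rw [Real.norm_eq_abs, comp]
  have := row i n hn
  linarith [this]
end
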